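/- arXiv:1101.1400 — 2 statements merged into one kernel-verified Lean document; each statement's English description precedes it below -/
import Mathlib

section
/- For n ≥ 3 and k ≥ 0, every braid β of the positive braid monoid B⁺_n admits a unique maximal right divisor lying in φ_n^k(B⁺_{n−1}); that is, there exists a unique β₁ ∈ φ_n^k(B⁺_{n−1}) such that β₁ right divides β and every right divisor of β lying in φ_n^k(B⁺_{n−1}) right divides β₁. -/
namespace Braid

/-- Defining relations of the braid group, with generators indexed by `Fin m`
(the index `i : Fin m` stands for the Artin generator `σ_{i+1}`). -/
def braidRels (m : ℕ) : Set (FreeGroup (Fin m)) :=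
  {r | ∃ i j : Fin m,
      ((i : ℕ) + 2 ≤ (j : ℕ) ∧
        r = FreeGroup.of i * FreeGroup.of j * (FreeGroup.of i)⁻¹ * (FreeGroup.of j)⁻¹) ∨
      ((j : ℕ) = (i : ℕ) + 1 ∧
        r = FreeGroup.of i * FreeGroup.of j * FreeGroup.of i *
            (FreeGroup.of j)⁻¹ * (FreeGroup.of i)⁻¹ * (FreeGroup.of j)⁻¹)}

/-- The braid group `B_n` on `n` strands, presented by the Artin generators
`σ_1, …, σ_{n-1}` and the braid relations. -/
abbrev B (n : ℕ) : Type := PresentedGroup (braidRels (n - 1))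

/-- The Artin generator `σ_i` of `B n`, for `1 ≤ i ≤ n-1` (junk value `1` otherwise). -/
def gen (n i : ℕ) : B n :=
  if h : i - 1 < n - 1 then PresentedGroup.of (⟨i - 1, h⟩ : Fin (n - 1)) else 1

/-- The positive braid monoid `B⁺_k` inside `B n`: the submonoid generated by
`σ_1, …, σ_{k-1}`. -/
def Bplus (n k : ℕ) : Submonoid (B n) :=
  Submonoid.closure {x | ∃ i, 1 ≤ i ∧ i + 1 ≤ k ∧ x = gen n i}

/-- The subgroup `B_k` of `B n`, generated by `σ_1, …, σ_{k-1}`. -/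
def Bsub (n k : ℕ) : Subgroup (B n) :=
  Subgroup.closure {x | ∃ i, 1 ≤ i ∧ i + 1 ≤ k ∧ x = gen n i}

/-- `β` left-divides `γ` (with respect to the positive monoid `B⁺_n`). -/
def LDiv (n : ℕ) (β γ : B n) : Prop := β⁻¹ * γ ∈ Bplus n n

/-- `β` right-divides `γ` (with respect to the positive monoid `B⁺_n`). -/
def RDiv (n : ℕ) (β γ : B n) : Prop := γ * β⁻¹ ∈ Bplus n n

/-- The Garside element `Δ_k = (σ_1⋯σ_{k-1})(σ_1⋯σ_{k-2})⋯(σ_1σ_2)σ_1` of `B⁺_k`,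
viewed inside `B n`. -/
def delta (n k : ℕ) : B n :=
  ((List.range (k - 1)).reverse.map
    (fun j => ((List.range' 1 (j + 1)).map (gen n)).prod)).prod

/-- The `k`-th power of the flip automorphism `φ_n` of `B n`:
conjugation by `Δ_n^k`. -/
def flip (n k : ℕ) (x : B n) : B n := delta n n ^ k * x * (delta n n ^ k)⁻¹

/-- The set `φ_n^k(B⁺_{n-1})` inside `B n`. -/
def flipSet (n k : ℕ) : Set (B n) := flip n k '' (Bplus n (n - 1) : Set (B n))

/-- `δ` is the maximal right divisor of `β` lying in the set `X`:
`δ ∈ X`, `δ` right-divides `β`, and every right divisor of `β` lying in `X`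
right-divides `δ`. -/
def IsMaxRDivIn (n : ℕ) (X : Set (B n)) (β δ : B n) : Prop :=
  δ ∈ X ∧ RDiv n δ β ∧ ∀ γ ∈ X, RDiv n γ β → RDiv n γ δ

/-- The product `φ_n^{d-1}(b d) ⋯ φ_n^{k-1}(b k)` (factors in decreasing order of
the index, from `d` down to `k`). -/
def tailProd (n : ℕ) (b : ℕ → B n) (k d : ℕ) : B n :=
  ((List.range' k (d + 1 - k)).reverse.map (fun l => flip n (l - 1) (b l))).prod

/-- `(b d, …, b 1)` is the `φ_n`-splitting of `β`: each `b k` lies in `B⁺_{n-1}`,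
`b d ≠ 1`, `β = φ_n^{d-1}(b d) ⋯ φ_n(b 2) (b 1)`, and for each `k`, the element
`φ_n^{k-1}(b k)` is the maximal right divisor of `φ_n^{d-1}(b d) ⋯ φ_n^{k-1}(b k)`
lying in `φ_n^{k-1}(B⁺_{n-1})`. -/
def IsSplitting (n d : ℕ) (b : ℕ → B n) (β : B n) : Prop :=
  1 ≤ d ∧ (∀ k, 1 ≤ k → k ≤ d → b k ∈ Bplus n (n - 1)) ∧ b d ≠ 1 ∧
  β = tailProd n b 1 d ∧
  ∀ k, 1 ≤ k → k ≤ d →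
    IsMaxRDivIn n (flipSet n (k - 1)) (tailProd n b k d) (flip n (k - 1) (b k))

/-- Evaluation of a word over the letters `σ_i^{±1}` in `B n`: the letter `(i, true)`
stands for `σ_i` and `(i, false)` for `σ_i⁻¹`. -/
def evalWord (n : ℕ) (w : List (ℕ × Bool)) : B n :=
  (w.map (fun p => if p.2 then gen n p.1 else (gen n p.1)⁻¹)).prod

/-- A word over the letters `σ_j^{±1}` is `σ_i`-positive: it contains at least one
letter `σ_i`, no letter `σ_i⁻¹` and no letter `σ_j^{±1}` with `j > i`. -/
def SigmaPos (i : ℕ) (w : List (ℕ × Bool)) : Prop :=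
  (i, true) ∈ w ∧ (i, false) ∉ w ∧ ∀ p ∈ w, 1 ≤ p.1 ∧ p.1 ≤ i

/-- A word over the letters `σ_j^{±1}` is `σ_i`-negative: it contains at least one
letter `σ_i⁻¹`, no letter `σ_i` and no letter `σ_j^{±1}` with `j > i`. -/
def SigmaNeg (i : ℕ) (w : List (ℕ × Bool)) : Prop :=
  (i, false) ∈ w ∧ (i, true) ∉ w ∧ ∀ p ∈ w, 1 ≤ p.1 ∧ p.1 ≤ i

/-- The Dehornoy ordering on `B n`: `β < γ` iff `β⁻¹γ` is represented by a
`σ_i`-positive word for some `i ≤ n-1`. -/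
def dlt (n : ℕ) (β γ : B n) : Prop :=
  ∃ i w, i + 1 ≤ n ∧ SigmaPos i w ∧ evalWord n w = β⁻¹ * γ

/-- The nonstrict Dehornoy ordering. -/
def dle (n : ℕ) (β γ : B n) : Prop := dlt n β γ ∨ β = γ

/-- The minimal length of a word over `σ_1^{±1}, …, σ_{n-1}^{±1}` representing `β`. -/
noncomputable def normSigma (n : ℕ) (β : B n) : ℕ :=
  sInf {l | ∃ w : List (ℕ × Bool), (∀ p ∈ w, 1 ≤ p.1 ∧ p.1 ≤ n - 1) ∧
    evalWord n w = β ∧ w.length = l}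

/-- The (common) length of the positive words over `σ_1, …, σ_{n-1}` representing a
positive braid `β`. -/
noncomputable def posLen (n : ℕ) (β : B n) : ℕ :=
  sInf {l | ∃ w : List (ℕ × Bool), (∀ p ∈ w, 1 ≤ p.1 ∧ p.1 ≤ n - 1 ∧ p.2 = true) ∧
    evalWord n w = β ∧ w.length = l}

/-- The Birman–Ko–Lee generator `a_{p,q} = σ_p ⋯ σ_{q-2} σ_{q-1} σ_{q-2}⁻¹ ⋯ σ_p⁻¹`
of `B n`. -/
def bkl (n p q : ℕ) : B n :=
  ((List.range' p (q - 1 - p)).map (gen n)).prod * gen n (q - 1) *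
    (((List.range' p (q - 1 - p)).map (gen n)).prod)⁻¹

/-- The dual braid monoid `B⁺*_n`: the submonoid of `B n` generated by the
Birman–Ko–Lee generators. -/
def DualBplus (n : ℕ) : Submonoid (B n) :=
  Submonoid.closure {x | ∃ p q, 1 ≤ p ∧ p < q ∧ q ≤ n ∧ x = bkl n p q}

/-- Evaluation in `B n` of a word over the letters `a_{p,q}^{±1}`. -/
def evalDual (n : ℕ) (w : List ((ℕ × ℕ) × Bool)) : B n :=
  (w.map (fun l => if l.2 then bkl n l.1.1 l.1.2 else (bkl n l.1.1 l.1.2)⁻¹)).prod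

/-- The minimal length of a word over the letters `a_{p,q}^{±1}` (`1 ≤ p < q ≤ n`)
representing `β`. -/
noncomputable def normDual (n : ℕ) (β : B n) : ℕ :=
  sInf {l | ∃ w : List ((ℕ × ℕ) × Bool),
    (∀ p ∈ w, 1 ≤ p.1.1 ∧ p.1.1 < p.1.2 ∧ p.1.2 ≤ n) ∧ evalDual n w = β ∧ w.length = l}



/-! ### Words over shifted letters: letter `i : ℕ` stands for `σ_{i+1}`. -/

/-- One braid rewriting step on positive words. -/
inductive Step : List ℕ → List ℕ → Prop
  | comm (u v : List ℕ) (i j : ℕ) (h : i + 2 ≤ j) :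
      Step (u ++ i :: j :: v) (u ++ j :: i :: v)
  | braid (u v : List ℕ) (i : ℕ) :
      Step (u ++ i :: (i+1) :: i :: v) (u ++ (i+1) :: i :: (i+1) :: v)

def Rel (w w' : List ℕ) : Prop := Step w w' ∨ Step w' w

def Eqv : List ℕ → List ℕ → Prop := Relation.ReflTransGen Rel

infix:50 " ~~ " => Eqv

theorem Rel.symm' {w w' : List ℕ} (h : Rel w w') : Rel w' w := h.elim Or.inr Or.inl

theorem Eqv.refl (w : List ℕ) : w ~~ w := Relation.ReflTransGen.refl

theorem Eqv.rfl {w : List ℕ} : w ~~ w := Relation.ReflTransGen.refl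

theorem Eqv.symm {w w' : List ℕ} (h : w ~~ w') : w' ~~ w :=
  (@Relation.ReflTransGen.stdSymm _ Rel ⟨fun _ _ => Rel.symm'⟩).symm _ _ h

theorem Eqv.trans {w₁ w₂ w₃ : List ℕ} (h : w₁ ~~ w₂) (h' : w₂ ~~ w₃) : w₁ ~~ w₃ :=
  Relation.ReflTransGen.trans h h'

instance : Trans Eqv Eqv Eqv := ⟨Eqv.trans⟩

theorem Rel.eqv {w w' : List ℕ} (h : Rel w w') : w ~~ w' :=
  Relation.ReflTransGen.single h

theorem Step.eqv {w w' : List ℕ} (h : Step w w') : w ~~ w' := Rel.eqv (Or.inl h)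

theorem Step.append {w w' : List ℕ} (x y : List ℕ) (h : Step w w') :
    Step (x ++ w ++ y) (x ++ w' ++ y) := by
  cases h with
  | comm u v i j hij =>
      have e1 : x ++ (u ++ i :: j :: v) ++ y = (x ++ u) ++ i :: j :: (v ++ y) := by
        simp [List.append_assoc]
      have e2 : x ++ (u ++ j :: i :: v) ++ y = (x ++ u) ++ j :: i :: (v ++ y) := by
        simp [List.append_assoc]
      rw [e1, e2]; exact Step.comm _ _ _ _ hij
  | braid u v i =>
      have e1 : x ++ (u ++ i :: (i+1) :: i :: v) ++ y = (x ++ u) ++ i :: (i+1) :: i :: (v ++ y) := by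
        simp [List.append_assoc]
      have e2 : x ++ (u ++ (i+1) :: i :: (i+1) :: v) ++ y
          = (x ++ u) ++ (i+1) :: i :: (i+1) :: (v ++ y) := by
        simp [List.append_assoc]
      rw [e1, e2]; exact Step.braid _ _ _

theorem Eqv.append_ctx {w w' : List ℕ} (x y : List ℕ) (h : w ~~ w') :
    (x ++ w ++ y) ~~ (x ++ w' ++ y) := by
  refine Relation.ReflTransGen.lift (fun w => x ++ w ++ y) (fun a b hab => ?_) _ _ h
  exact hab.elim (fun h => Or.inl (h.append x y)) (fun h => Or.inr (h.append x y))

theorem Eqv.append_left {w w' : List ℕ} (x : List ℕ) (h : w ~~ w') :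
    (x ++ w) ~~ (x ++ w') := by
  have := h.append_ctx x []
  simpa using this

theorem Eqv.append_right {w w' : List ℕ} (y : List ℕ) (h : w ~~ w') :
    (w ++ y) ~~ (w' ++ y) := by
  have := h.append_ctx [] y
  simpa using this

theorem Eqv.append_congr {w₁ w₂ z₁ z₂ : List ℕ} (h : w₁ ~~ w₂) (h' : z₁ ~~ z₂) :
    (w₁ ++ z₁) ~~ (w₂ ++ z₂) :=
  (h.append_right z₁).trans (h'.append_left w₂)

theorem Step.length {w w' : List ℕ} (h : Step w w') : w.length = w'.length := by
  cases h <;> simp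

theorem Eqv.length {w w' : List ℕ} (h : w ~~ w') : w.length = w'.length := by
  induction h with
  | refl => rfl
  | tail _ hstep ih => exact ih.trans (hstep.elim Step.length (fun h => h.length.symm))

theorem Step.mem {w w' : List ℕ} (h : Step w w') {x : ℕ} (hx : x ∈ w') : x ∈ w := by
  cases h with
  | comm u v i j hij => simp only [List.mem_append, List.mem_cons] at hx ⊢; tauto
  | braid u v i => simp only [List.mem_append, List.mem_cons] at hx ⊢; tauto

theorem Step.mem' {w w' : List ℕ} (h : Step w w') {x : ℕ} (hx : x ∈ w) : x ∈ w' := by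
  cases h with
  | comm u v i j hij => simp only [List.mem_append, List.mem_cons] at hx ⊢; tauto
  | braid u v i => simp only [List.mem_append, List.mem_cons] at hx ⊢; tauto

theorem Eqv.mem {w w' : List ℕ} (h : w ~~ w') {x : ℕ} (hx : x ∈ w') : x ∈ w := by
  induction h with
  | refl => exact hx
  | tail _ hstep ih => exact ih (hstep.elim (fun h => h.mem hx) (fun h => h.mem' hx))

theorem Eqv.sub {w w' : List ℕ} (h : w ~~ w') {P : ℕ → Prop} (hP : ∀ x ∈ w, P x) :
    ∀ x ∈ w', P x := fun x hx => hP x (h.mem hx)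

/-- single mid-swap -/
theorem comm_mid {i j : ℕ} (h : i + 2 ≤ j) (u v : List ℕ) :
    (u ++ i :: j :: v) ~~ (u ++ j :: i :: v) := (Step.comm u v i j h).eqv

theorem braid_mid (i : ℕ) (u v : List ℕ) :
    (u ++ i :: (i+1) :: i :: v) ~~ (u ++ (i+1) :: i :: (i+1) :: v) := (Step.braid u v i).eqv

def adj (a b : ℕ) : Prop := a + 1 = b ∨ b + 1 = a

def C (a b : ℕ) : List ℕ :=
  if a = b then [] else if a + 1 = b ∨ b + 1 = a then [b, a] else [b]

theorem C_same (a : ℕ) : C a a = [] := by simp [C]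

theorem C_adj {a b : ℕ} (h : a + 1 = b ∨ b + 1 = a) (hne : a ≠ b) : C a b = [b, a] := by
  simp [C, hne, h]

theorem C_far {a b : ℕ} (h : ¬(a + 1 = b ∨ b + 1 = a)) (hne : a ≠ b) : C a b = [b] := by
  simp [C, hne, h]

theorem C_mem {a b x : ℕ} (hx : x ∈ C a b) : x = a ∨ x = b := by
  unfold C at hx
  split at hx
  · simp at hx
  · split at hx <;> simp at hx <;> tauto

theorem C_length_le (a b : ℕ) : (C a b).length ≤ 2 := by
  unfold C; split; · simp
  split <;> simp

/-- swap `[a,b] ~~ [b,a]` for far letters, symmetric form -/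
theorem swap_far {a b : ℕ} (h : a + 2 ≤ b ∨ b + 2 ≤ a) (u v : List ℕ) :
    (u ++ a :: b :: v) ~~ (u ++ b :: a :: v) := by
  rcases h with h | h
  · exact comm_mid h u v
  · exact (comm_mid h u v).symm

/-- braid in both orders: `[a,b,a] ~~ [b,a,b]` when `adj a b`. -/
theorem braid_adj {a b : ℕ} (h : a + 1 = b ∨ b + 1 = a) (u v : List ℕ) :
    (u ++ a :: b :: a :: v) ~~ (u ++ b :: a :: b :: v) := by
  rcases h with h | h
  · subst h; exact braid_mid a u v
  · subst h; exact (braid_mid b u v).symm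

/-- the key head-lcm relation: `a :: C a b ~~ b :: C b a`. -/
theorem head_lcm (a b : ℕ) : (a :: C a b) ~~ (b :: C b a) := by
  by_cases hab : a = b
  · subst hab; exact Eqv.rfl
  by_cases hadj : a + 1 = b ∨ b + 1 = a
  · rw [C_adj hadj hab, C_adj (Or.symm hadj) (fun h => hab h.symm)]
    have := braid_adj hadj ([] : List ℕ) []
    simpa using this
  · have hadj' : ¬(b + 1 = a ∨ a + 1 = b) := fun h => hadj (h.symm)
    rw [C_far hadj hab, C_far hadj' (fun h => hab h.symm)]
    have hfar : a + 2 ≤ b ∨ b + 2 ≤ a := by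
      rcases Nat.lt_or_ge a b with h | h
      · left; omega
      · right; omega
    have := swap_far hfar ([] : List ℕ) []
    simpa using this

/-- a letter far from all of `y` moves across `y`. -/
theorem far_pass {c : ℕ} {y : List ℕ} (h : ∀ x ∈ y, x + 2 ≤ c ∨ c + 2 ≤ x) (z : List ℕ) :
    (c :: (y ++ z)) ~~ (y ++ c :: z) := by
  induction y with
  | nil => simp [Eqv.rfl]
  | cons b y ih =>
      have h1 : (c :: (b :: y ++ z)) ~~ (b :: c :: (y ++ z)) := by
        have hb := h b (by simp)
        have := swap_far (hb.symm.imp id id) ([] : List ℕ) (y ++ z)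
        simpa using this
      refine h1.trans ?_
      have := (ih (fun x hx => h x (by simp [hx]))).append_left [b]
      simpa using this


theorem SLfwd {w₁ w₂ : List ℕ} (h : Step w₁ w₂) :
    ∀ a u, w₁ = a :: u →
      (∃ s, w₂ = a :: s ∧ u ~~ s) ∨
        (∃ c r, c ≠ a ∧ u = C a c ++ r ∧ w₂ = c :: (C c a ++ r)) := by
  have hfar : ∀ i j : ℕ, i + 2 ≤ j → (¬(i + 1 = j ∨ j + 1 = i)) := by intros; omega
  cases h with
  | comm u₀ v₀ i j hij =>
      intro a u heq
      cases u₀ with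
      | nil =>
          simp only [List.nil_append, List.cons.injEq] at heq
          obtain ⟨rfl, rfl⟩ := heq
          right
          refine ⟨j, v₀, by omega, ?_, ?_⟩
          · rw [C_far (hfar _ _ hij) (by omega)]; rfl
          · rw [C_far (fun h => hfar _ _ hij h.symm) (by omega)]; rfl
      | cons d u₀ =>
          simp only [List.cons_append, List.cons.injEq] at heq
          obtain ⟨rfl, rfl⟩ := heq
          exact Or.inl ⟨u₀ ++ j :: i :: v₀, rfl, comm_mid hij u₀ v₀⟩
  | braid u₀ v₀ i =>
      intro a u heq
      cases u₀ with
      | nil =>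
          simp only [List.nil_append, List.cons.injEq] at heq
          obtain ⟨rfl, rfl⟩ := heq
          right
          refine ⟨i + 1, v₀, by omega, ?_, ?_⟩
          · rw [C_adj (Or.inl rfl) (by omega)]; rfl
          · rw [C_adj (Or.inr rfl) (by omega)]; rfl
      | cons d u₀ =>
          simp only [List.cons_append, List.cons.injEq] at heq
          obtain ⟨rfl, rfl⟩ := heq
          exact Or.inl ⟨u₀ ++ (i+1) :: i :: (i+1) :: v₀, rfl, braid_mid i u₀ v₀⟩

theorem SLbwd {w₁ w₂ : List ℕ} (h : Step w₂ w₁) :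
    ∀ a u, w₁ = a :: u →
      (∃ s, w₂ = a :: s ∧ u ~~ s) ∨
        (∃ c r, c ≠ a ∧ u = C a c ++ r ∧ w₂ = c :: (C c a ++ r)) := by
  have hfar : ∀ i j : ℕ, i + 2 ≤ j → (¬(i + 1 = j ∨ j + 1 = i)) := by intros; omega
  cases h with
  | comm u₀ v₀ i j hij =>
      intro a u heq
      cases u₀ with
      | nil =>
          simp only [List.nil_append, List.cons.injEq] at heq
          obtain ⟨rfl, rfl⟩ := heq
          right
          refine ⟨i, v₀, by omega, ?_, ?_⟩
          · rw [C_far (fun h => hfar _ _ hij h.symm) (by omega)]; rfl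
          · rw [C_far (hfar _ _ hij) (by omega)]; rfl
      | cons d u₀ =>
          simp only [List.cons_append, List.cons.injEq] at heq
          obtain ⟨rfl, rfl⟩ := heq
          exact Or.inl ⟨u₀ ++ i :: j :: v₀, rfl, (comm_mid hij u₀ v₀).symm⟩
  | braid u₀ v₀ i =>
      intro a u heq
      cases u₀ with
      | nil =>
          simp only [List.nil_append, List.cons.injEq] at heq
          obtain ⟨rfl, rfl⟩ := heq
          right
          refine ⟨i, v₀, by omega, ?_, ?_⟩
          · rw [C_adj (Or.inr rfl) (by omega)]; rfl
          · rw [C_adj (Or.inl rfl) (by omega)]; rfl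
      | cons d u₀ =>
          simp only [List.cons_append, List.cons.injEq] at heq
          obtain ⟨rfl, rfl⟩ := heq
          exact Or.inl ⟨u₀ ++ i :: (i+1) :: i :: v₀, rfl, (braid_mid i u₀ v₀).symm⟩

theorem SL {a : ℕ} {u w : List ℕ} (h : Rel (a :: u) w) :
    (∃ s, w = a :: s ∧ u ~~ s) ∨
      (∃ c r, c ≠ a ∧ u = C a c ++ r ∧ w = c :: (C c a ++ r)) := by
  rcases h with h | h
  · exact SLfwd h a u rfl
  · exact SLbwd h a u rfl

/-- Statement of the main (Garside) lemma, with a length bound for induction. -/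
def MLStmt (ℓ : ℕ) : Prop :=
  ∀ w₁ w₂ : List ℕ, w₁.length ≤ ℓ → w₁ ~~ w₂ →
    ∀ a u b v, w₁ = a :: u → w₂ = b :: v → ∃ t, (u ~~ C a b ++ t) ∧ (v ~~ C b a ++ t)

section CubeHelpers

variable {ℓ : ℕ} (H : ∀ m, m < ℓ → MLStmt m)
include H

theorem useH {a b : ℕ} {u v : List ℕ} (h : (a :: u) ~~ (b :: v)) (hl : u.length + 1 < ℓ) :
    ∃ t, (u ~~ C a b ++ t) ∧ (v ~~ C b a ++ t) :=
  H (u.length + 1) hl (a :: u) (b :: v) (by simp) h a u b v rfl rfl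

theorem cancel_one {a : ℕ} {x y : List ℕ} (h : (a :: x) ~~ (a :: y))
    (hl : x.length + 1 < ℓ) : x ~~ y := by
  obtain ⟨t, h1, h2⟩ := useH H h hl
  rw [C_same] at h1 h2
  simp only [List.nil_append] at h1 h2
  exact h1.trans h2.symm

theorem cancel_word {p x y : List ℕ} (h : (p ++ x) ~~ (p ++ y))
    (hl : (p ++ x).length < ℓ) : x ~~ y := by
  induction p generalizing ℓ with
  | nil => simpa using h
  | cons d p ih =>
      simp only [List.cons_append] at h hl
      have h' : (p ++ x) ~~ (p ++ y) := cancel_one H h (by simpa using hl)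
      exact ih H h' (by simp at hl ⊢; omega)

end CubeHelpers

section Identities

theorem idA1 {a b c : ℕ} (fab : a+2 ≤ b ∨ b+2 ≤ a) (fcb : c+2 ≤ b ∨ b+2 ≤ c) (z : List ℕ) :
    ([c,a,b] ++ z) ~~ ([b,c,a] ++ z) := by
  have s1 : (c :: a :: b :: z) ~~ (c :: b :: a :: z) := by
    simpa using swap_far fab [c] z
  have s2 : (c :: b :: a :: z) ~~ (b :: c :: a :: z) := by
    simpa using swap_far fcb ([] : List ℕ) (a :: z)
  simpa using s1.trans s2

theorem idA2 {a c : ℕ} (hac : a+1 = c ∨ c+1 = a) (z : List ℕ) :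
    ([c,a,c] ++ z) ~~ ([a,c,a] ++ z) := by
  have := braid_adj (Or.symm hac) ([] : List ℕ) z
  simpa using this

theorem idW1 {a b c : ℕ} (hac : a+1 = c ∨ c+1 = a) (hab : a+1 = b ∨ b+1 = a)
    (fbc : b+2 ≤ c ∨ c+2 ≤ b) (z : List ℕ) :
    ([c,a,b,a,c] ++ z) ~~ ([b,a,c,a,b] ++ z) := by
  have s1 : (c :: a :: b :: a :: c :: z) ~~ (c :: b :: a :: b :: c :: z) := by
    simpa using braid_adj hab [c] (c :: z)
  have s2 : (c :: b :: a :: b :: c :: z) ~~ (b :: c :: a :: b :: c :: z) := by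
    simpa using swap_far (Or.symm fbc) ([] : List ℕ) (a :: b :: c :: z)
  have s3 : (b :: c :: a :: b :: c :: z) ~~ (b :: c :: a :: c :: b :: z) := by
    simpa using swap_far fbc [b,c,a] z
  have s4 : (b :: c :: a :: c :: b :: z) ~~ (b :: a :: c :: a :: b :: z) := by
    simpa using braid_adj (Or.symm hac) [b] (b :: z)
  simpa using ((s1.trans s2).trans s3).trans s4

theorem idW2 {a b c : ℕ} (hac : a+1 = c ∨ c+1 = a) (hab : a+1 = b ∨ b+1 = a)
    (fbc : b+2 ≤ c ∨ c+2 ≤ b) (z : List ℕ) :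
    ([c,a,b,c,a] ++ z) ~~ ([a,b,c,a,b] ++ z) := by
  have s1 : (c :: a :: b :: c :: a :: z) ~~ (c :: a :: c :: b :: a :: z) := by
    simpa using swap_far fbc [c,a] (a :: z)
  have s2 : (c :: a :: c :: b :: a :: z) ~~ (a :: c :: a :: b :: a :: z) := by
    simpa using braid_adj (Or.symm hac) ([] : List ℕ) (b :: a :: z)
  have s3 : (a :: c :: a :: b :: a :: z) ~~ (a :: c :: b :: a :: b :: z) := by
    simpa using braid_adj hab [a,c] z
  have s4 : (a :: c :: b :: a :: b :: z) ~~ (a :: b :: c :: a :: b :: z) := by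
    simpa using swap_far (Or.symm fbc) [a] (a :: b :: z)
  simpa using ((s1.trans s2).trans s3).trans s4

theorem idW3 {a b c : ℕ} (hac : a+1 = c ∨ c+1 = a) (hbc : b+1 = c ∨ c+1 = b)
    (fab : a+2 ≤ b ∨ b+2 ≤ a) (z : List ℕ) :
    ([c,a,b,c,a] ++ z) ~~ ([b,c,b,a,c] ++ z) := by
  have s1 : (c :: a :: b :: c :: a :: z) ~~ (c :: b :: a :: c :: a :: z) := by
    simpa using swap_far fab [c] (c :: a :: z)
  have s2 : (c :: b :: a :: c :: a :: z) ~~ (c :: b :: c :: a :: c :: z) := by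
    simpa using braid_adj hac [c,b] z
  have s3 : (c :: b :: c :: a :: c :: z) ~~ (b :: c :: b :: a :: c :: z) := by
    simpa using braid_adj (Or.symm hbc) ([] : List ℕ) (a :: c :: z)
  simpa using (s1.trans s2).trans s3

theorem idW4 {a b c : ℕ} (hac : a+1 = c ∨ c+1 = a) (hbc : b+1 = c ∨ c+1 = b)
    (fab : a+2 ≤ b ∨ b+2 ≤ a) (z : List ℕ) :
    ([c,b,a,c,b] ++ z) ~~ ([a,c,b,a,c] ++ z) := by
  have s1 : (c :: b :: a :: c :: b :: z) ~~ (c :: a :: b :: c :: b :: z) := by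
    simpa using swap_far (Or.symm fab) [c] (c :: b :: z)
  have s2 : (c :: a :: b :: c :: b :: z) ~~ (c :: a :: c :: b :: c :: z) := by
    simpa using braid_adj hbc [c,a] z
  have s3 : (c :: a :: c :: b :: c :: z) ~~ (a :: c :: a :: b :: c :: z) := by
    simpa using braid_adj (Or.symm hac) ([] : List ℕ) (b :: c :: z)
  have s4 : (a :: c :: a :: b :: c :: z) ~~ (a :: c :: b :: a :: c :: z) := by
    simpa using swap_far fab [a,c] (c :: z)
  simpa using ((s1.trans s2).trans s3).trans s4

end Identities

section Cube

variable {ℓ : ℕ} (H : ∀ m, m < ℓ → MLStmt m)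
include H

theorem cube_core {a b c : ℕ} {r t₁ : List ℕ}
    (hab : a ≠ b) (hac : a ≠ c) (hbc : b ≠ c)
    (hkey : ¬(b + 1 = c ∨ c + 1 = b) ∨ (a + 1 = c ∨ c + 1 = a))
    (hlen : (C c a ++ r).length < ℓ)
    (h1 : (C c a ++ r) ~~ (C c b ++ t₁)) :
    ∃ t, ((C a c ++ r) ~~ (C a b ++ t)) ∧ ((C b c ++ t₁) ~~ (C b a ++ t)) := by
  have hlen1 := h1.length
  by_cases pac : a + 1 = c ∨ c + 1 = a
  · by_cases pbc : b + 1 = c ∨ c + 1 = b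
    · -- P4 : both adjacent to c, hence a,b far
      have fab : a + 2 ≤ b ∨ b + 2 ≤ a := by omega
      have nab : ¬(a + 1 = b ∨ b + 1 = a) := by omega
      rw [C_adj (Or.symm pac) (Ne.symm hac)] at h1 hlen hlen1
      rw [C_adj (Or.symm pbc) (Ne.symm hbc)] at h1 hlen1
      rw [C_adj pac hac, C_adj pbc hbc, C_far nab hab,
        C_far (fun h => nab (Or.symm h)) (Ne.symm hab)]
      simp only [List.cons_append, List.nil_append, List.length_cons] at h1 hlen hlen1 ⊢
      obtain ⟨t₂, h2, h3⟩ := useH H h1 (by first | (simp only [List.length_cons]; omega) | omega)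
      rw [C_far nab hab] at h2
      rw [C_far (fun h => nab (Or.symm h)) (Ne.symm hab)] at h3
      simp only [List.cons_append, List.nil_append] at h2 h3
      have l2 := h2.length; simp only [List.length_cons] at l2
      obtain ⟨t₃, h4, h5⟩ := useH H h2 (by first | (simp only [List.length_cons]; omega) | omega)
      rw [C_adj (Or.symm pbc) (Ne.symm hbc)] at h4
      rw [C_adj pbc hbc] at h5
      simp only [List.cons_append, List.nil_append] at h4 h5
      have l4 := h4.length; simp only [List.length_cons] at l4
      have h3' : (c :: t₁) ~~ (a :: c :: b :: t₃) :=
        h3.trans ((h5.append_left [a]).trans (Eqv.rfl))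
      have l3 := h3.length; simp only [List.length_cons] at l3
      obtain ⟨t₄, h6, h7⟩ := useH H h3' (by first | (simp only [List.length_cons]; omega) | omega)
      rw [C_adj (Or.symm pac) (Ne.symm hac)] at h6
      rw [C_adj pac hac] at h7
      simp only [List.cons_append, List.nil_append] at h6 h7
      have l6 := h6.length; simp only [List.length_cons] at l6
      have h8 : (b :: t₃) ~~ (a :: t₄) := cancel_one H h7 (by first | (simp only [List.length_cons]; omega) | omega)
      obtain ⟨t₅, h9, h10⟩ := useH H h8 (by first | (simp only [List.length_cons]; omega) | omega)
      rw [C_far (fun h => nab (Or.symm h)) (Ne.symm hab)] at h9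
      rw [C_far nab hab] at h10
      simp only [List.cons_append, List.nil_append] at h9 h10
      refine ⟨c :: b :: a :: c :: t₅, ?_, ?_⟩
      · -- [c,a] ++ r ~~ [b] ++ [c,b,a,c] ++ t₅
        have hr : r ~~ (b :: c :: a :: t₅) :=
          h4.trans ((h9.append_left [b,c]).trans Eqv.rfl)
        have e1 : (c :: a :: r) ~~ (c :: a :: b :: c :: a :: t₅) := hr.append_left [c,a]
        have e2 := idW3 pac pbc fab t₅
        simp only [List.cons_append, List.nil_append] at e2
        exact e1.trans e2
      · -- [c,b] ++ t₁ ~~ [a] ++ [c,b,a,c] ++ t₅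
        have ht : t₁ ~~ (a :: c :: b :: t₅) :=
          h6.trans ((h10.append_left [a,c]).trans Eqv.rfl)
        have e1 : (c :: b :: t₁) ~~ (c :: b :: a :: c :: b :: t₅) := ht.append_left [c,b]
        have e2 := idW4 pac pbc fab t₅
        simp only [List.cons_append, List.nil_append] at e2
        exact e1.trans e2
    · -- P2 : a adjacent to c, b far from c
      have fcb : c + 2 ≤ b ∨ b + 2 ≤ c := by omega
      rw [C_adj (Or.symm pac) (Ne.symm hac)] at h1 hlen hlen1
      rw [C_far (fun h => pbc (Or.symm h)) (Ne.symm hbc)] at h1 hlen1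
      rw [C_adj pac hac, C_far pbc hbc]
      simp only [List.cons_append, List.nil_append, List.length_cons] at h1 hlen hlen1 ⊢
      obtain ⟨t₂, h2, h3⟩ := useH H h1 (by first | (simp only [List.length_cons]; omega) | omega)
      by_cases pab : a + 1 = b ∨ b + 1 = a
      · -- P2-adj
        rw [C_adj pab hab] at h2 ⊢
        rw [C_adj (Or.symm pab) (Ne.symm hab)] at h3 ⊢
        simp only [List.cons_append, List.nil_append] at h2 h3 ⊢
        have l2 := h2.length; simp only [List.length_cons] at l2
        obtain ⟨t₃, h4, h5⟩ := useH H h2 (by first | (simp only [List.length_cons]; omega) | omega)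
        rw [C_far (fun h => pbc (Or.symm h)) (Ne.symm hbc)] at h4
        rw [C_far pbc hbc] at h5
        simp only [List.cons_append, List.nil_append] at h4 h5
        have l5 := h5.length; simp only [List.length_cons] at l5
        obtain ⟨t₄, h6, h7⟩ := useH H h5 (by first | (simp only [List.length_cons]; omega) | omega)
        rw [C_adj pac hac] at h6
        rw [C_adj (Or.symm pac) (Ne.symm hac)] at h7
        simp only [List.cons_append, List.nil_append] at h6 h7
        refine ⟨c :: a :: b :: t₄, ?_, ?_⟩
        · have hr : r ~~ (b :: a :: c :: t₄) := h4.trans (h7.append_left [b])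
          have e1 : (c :: a :: r) ~~ (c :: a :: b :: a :: c :: t₄) := hr.append_left [c,a]
          have e2 := idW1 pac pab fcb.symm t₄
          simp only [List.cons_append, List.nil_append] at e2
          exact e1.trans e2
        · have ht : t₁ ~~ (a :: b :: c :: a :: t₄) :=
            h3.trans (h6.append_left [a,b])
          have e1 : (c :: t₁) ~~ (c :: a :: b :: c :: a :: t₄) := ht.append_left [c]
          have e2 := idW2 pac pab fcb.symm t₄
          simp only [List.cons_append, List.nil_append] at e2
          exact e1.trans e2
      · -- P2-far
        have fab : a + 2 ≤ b ∨ b + 2 ≤ a := by omega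
        rw [C_far pab hab] at h2 ⊢
        rw [C_far (fun h => pab (Or.symm h)) (Ne.symm hab)] at h3 ⊢
        simp only [List.cons_append, List.nil_append] at h2 h3 ⊢
        have l2 := h2.length; simp only [List.length_cons] at l2
        obtain ⟨t₃, h4, h5⟩ := useH H h2 (by first | (simp only [List.length_cons]; omega) | omega)
        rw [C_far (fun h => pbc (Or.symm h)) (Ne.symm hbc)] at h4
        rw [C_far pbc hbc] at h5
        simp only [List.cons_append, List.nil_append] at h4 h5
        refine ⟨c :: a :: t₃, ?_, ?_⟩
        · have e1 : (c :: a :: r) ~~ (c :: a :: b :: t₃) := h4.append_left [c,a]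
          have e2 := idA1 fab fcb t₃
          simp only [List.cons_append, List.nil_append] at e2
          exact e1.trans e2
        · have ht : t₁ ~~ (a :: c :: t₃) := h3.trans (h5.append_left [a])
          have e1 : (c :: t₁) ~~ (c :: a :: c :: t₃) := ht.append_left [c]
          have e2 := idA2 pac t₃
          simp only [List.cons_append, List.nil_append] at e2
          exact e1.trans e2
  · -- a far from c; by hkey also b far from c
    have pbc : ¬(b + 1 = c ∨ c + 1 = b) := by
      rcases hkey with h | h
      · exact h
      · exact absurd h pac
    rw [C_far (fun h => pac (Or.symm h)) (Ne.symm hac)] at h1 hlen hlen1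
    rw [C_far (fun h => pbc (Or.symm h)) (Ne.symm hbc)] at h1 hlen1
    rw [C_far pac hac, C_far pbc hbc]
    simp only [List.cons_append, List.nil_append, List.length_cons] at h1 hlen hlen1 ⊢
    obtain ⟨t₂, h2, h3⟩ := useH H h1 (by first | (simp only [List.length_cons]; omega) | omega)
    refine ⟨c :: t₂, ?_, ?_⟩
    · have e1 : (c :: r) ~~ (c :: (C a b ++ t₂)) := h2.append_left [c]
      have e2 : (c :: (C a b ++ t₂)) ~~ (C a b ++ c :: t₂) := by
        refine far_pass (fun x hx => ?_) t₂
        rcases C_mem hx with rfl | rfl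
        · omega
        · omega
      exact e1.trans e2
    · have e1 : (c :: t₁) ~~ (c :: (C b a ++ t₂)) := h3.append_left [c]
      have e2 : (c :: (C b a ++ t₂)) ~~ (C b a ++ c :: t₂) := by
        refine far_pass (fun x hx => ?_) t₂
        rcases C_mem hx with rfl | rfl
        · omega
        · omega
      exact e1.trans e2

theorem cube {a b c : ℕ} {r t₁ : List ℕ}
    (hab : a ≠ b) (hac : a ≠ c) (hbc : b ≠ c)
    (hlen : (C c a ++ r).length < ℓ)
    (h1 : (C c a ++ r) ~~ (C c b ++ t₁)) :
    ∃ t, ((C a c ++ r) ~~ (C a b ++ t)) ∧ ((C b c ++ t₁) ~~ (C b a ++ t)) := by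
  by_cases hkey : ¬(b + 1 = c ∨ c + 1 = b) ∨ (a + 1 = c ∨ c + 1 = a)
  · exact cube_core H hab hac hbc hkey hlen h1
  · push_neg at hkey
    obtain ⟨h₁, h₂⟩ := hkey
    have hlen' : (C c b ++ t₁).length < ℓ := by rw [← h1.length]; exact hlen
    obtain ⟨t, g1, g2⟩ :=
      cube_core H (Ne.symm hab) hbc hac (Or.inr (not_not.mp (by tauto))) hlen' h1.symm
    exact ⟨t, g2, g1⟩
end Cube

theorem Rel.length {w w' : List ℕ} (h : Rel w w') : w.length = w'.length :=
  h.elim Step.length (fun h => h.length.symm)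

theorem ML : ∀ ℓ, MLStmt ℓ := by
  intro ℓ
  induction ℓ using Nat.strong_induction_on with
  | _ ℓ IH =>
    intro w₁ w₂ hlen h
    revert hlen
    induction h using Relation.ReflTransGen.head_induction_on with
    | refl =>
        intro hlen a u b v h1 h2
        rw [h1] at h2
        obtain ⟨rfl, rfl⟩ := List.cons.injEq .. |>.mp h2
        exact ⟨u, by rw [C_same]; exact Eqv.rfl, by rw [C_same]; exact Eqv.rfl⟩
    | head hrel hchain ihc =>
        intro hlen a u b v h1 h2
        subst h1
        rcases SL hrel with ⟨s, rfl, hus⟩ | ⟨c, r, hca, hu, hw⟩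
        · have hlen' : (a :: s).length ≤ ℓ := by
            rw [← hrel.length]; exact hlen
          obtain ⟨t, h1', h2'⟩ := ihc hlen' a s b v rfl h2
          exact ⟨t, hus.trans h1', h2'⟩
        · subst hw
          have hlen' : (c :: (C c a ++ r)).length ≤ ℓ := by
            rw [← hrel.length]; exact hlen
          obtain ⟨t₁, hA, hB⟩ := ihc hlen' c (C c a ++ r) b v rfl h2
          have hlc : (C c a ++ r).length < ℓ := by
            simp only [List.length_cons] at hlen'; omega
          by_cases hcb : b = c
          · subst hcb
            rw [C_same] at hA hB
            simp only [List.nil_append] at hA hB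
            refine ⟨r, ?_, ?_⟩
            · rw [hu]; exact Eqv.rfl
            · exact hB.trans hA.symm
          · by_cases hba : a = b
            · subst hba
              rw [C_same]
              have hr : r ~~ t₁ := cancel_word (fun m hm => IH m hm) hA hlc
              refine ⟨C a c ++ t₁, ?_, ?_⟩
              · simp only [List.nil_append]
                rw [hu]
                exact hr.append_left _
              · exact hB
            · obtain ⟨t, g1, g2⟩ :=
                cube (fun m hm => IH m hm) hba (Ne.symm hca) hcb hlc hA
              refine ⟨t, ?_, hB.trans g2⟩
              rw [hu]; exact g1

theorem useML {a b : ℕ} {u v : List ℕ} (h : (a :: u) ~~ (b :: v)) :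
    ∃ t, (u ~~ C a b ++ t) ∧ (v ~~ C b a ++ t) :=
  ML (u.length + 1) _ _ (by simp) h a u b v rfl rfl

theorem cancel_left {p x y : List ℕ} (h : (p ++ x) ~~ (p ++ y)) : x ~~ y :=
  cancel_word (ℓ := (p ++ x).length + 1) (fun m _ => ML m) h (by omega)

theorem Rel.reverse {w w' : List ℕ} (h : Rel w w') : Rel w.reverse w'.reverse := by
  rcases h with h | h
  · cases h with
    | comm u v i j hij =>
        right
        have : Step (v.reverse ++ i :: j :: u.reverse) (v.reverse ++ j :: i :: u.reverse) :=
          Step.comm _ _ _ _ hij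
        simpa [List.reverse_append] using this
    | braid u v i =>
        left
        have : Step (v.reverse ++ i :: (i+1) :: i :: u.reverse)
            (v.reverse ++ (i+1) :: i :: (i+1) :: u.reverse) := Step.braid _ _ _
        simpa [List.reverse_append] using this
  · cases h with
    | comm u v i j hij =>
        left
        have : Step (v.reverse ++ i :: j :: u.reverse) (v.reverse ++ j :: i :: u.reverse) :=
          Step.comm _ _ _ _ hij
        simpa [List.reverse_append] using this
    | braid u v i =>
        right
        have : Step (v.reverse ++ i :: (i+1) :: i :: u.reverse)
            (v.reverse ++ (i+1) :: i :: (i+1) :: u.reverse) := Step.braid _ _ _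
        simpa [List.reverse_append] using this

theorem Eqv.reverse {w w' : List ℕ} (h : w ~~ w') : w.reverse ~~ w'.reverse :=
  Relation.ReflTransGen.lift List.reverse (fun _ _ hab => Rel.reverse hab) _ _ h

theorem cancel_right {p x y : List ℕ} (h : (x ++ p) ~~ (y ++ p)) : x ~~ y := by
  have h' := h.reverse
  simp only [List.reverse_append] at h'
  have := cancel_left h'
  simpa using this.reverse

/-- Right lcm of two words (with universal property and alphabet control),
by induction on the length of a given common multiple. -/
theorem WW : ∀ (N : ℕ) (U X Y Z : List ℕ), (U ++ X).length ≤ N → (U ++ X) ~~ (Y ++ Z) →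
    ∃ P Q, ((U ++ P) ~~ (Y ++ Q)) ∧ (∀ x ∈ P, x ∈ U ∨ x ∈ Y) ∧ (∀ x ∈ Q, x ∈ U ∨ x ∈ Y) ∧
      ∀ X' Z', (U ++ X') ~~ (Y ++ Z') → ∃ W', (X' ~~ (P ++ W')) ∧ (Z' ~~ (Q ++ W')) := by
  intro N
  induction N using Nat.strong_induction_on with
  | _ N IH =>
    intro U X Y Z hlen h
    cases U with
    | nil =>
        refine ⟨Y, [], by simp [Eqv.rfl], fun x hx => Or.inr hx, by simp, ?_⟩
        intro X' Z' h'
        simp only [List.nil_append] at h'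
        exact ⟨Z', h', by simp [Eqv.rfl]⟩
    | cons a U' =>
      cases Y with
      | nil =>
        refine ⟨[], a :: U', by simp [Eqv.rfl], by simp, fun x hx => Or.inl hx, ?_⟩
        intro X' Z' h'
        simp only [List.nil_append] at h'
        exact ⟨X', by simp [Eqv.rfl], h'.symm⟩
      | cons b Y' =>
        simp only [List.cons_append] at h hlen
        obtain ⟨t, h2, h3⟩ := useML h
        have hlen2 : (U' ++ X).length ≤ N - 1 := by
          simp only [List.length_cons] at hlen; omega
        have hN : N - 1 < N := by
          simp only [List.length_cons] at hlen; omega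
        obtain ⟨P₁, Q₁, E1, mP₁, mQ₁, univ₁⟩ := IH (N - 1) hN U' X (C a b) t hlen2 h2
        obtain ⟨W₀, hXW, htW⟩ := univ₁ X t h2
        have h4 : (Y' ++ Z) ~~ ((C b a ++ Q₁) ++ W₀) := by
          refine (h3.trans ?_)
          have := (htW.append_left (C b a))
          simpa [List.append_assoc] using this
        have hlen3 : (Y' ++ Z).length ≤ N - 1 := by
          have hh := h.length
          simp only [List.length_cons] at hh hlen; omega
        obtain ⟨P₂, Q₂, E2, mP₂, mQ₂, univ₂⟩ := IH (N - 1) hN Y' Z (C b a ++ Q₁) W₀ hlen3 h4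
        refine ⟨P₁ ++ Q₂, P₂, ?_, ?_, ?_, ?_⟩
        · -- (a :: U') ++ (P₁ ++ Q₂) ~~ (b :: Y') ++ P₂
          have e1 : ((U' ++ P₁) ++ Q₂) ~~ ((C a b ++ Q₁) ++ Q₂) := E1.append_right Q₂
          have e2 : ((a :: C a b) ++ (Q₁ ++ Q₂)) ~~ ((b :: C b a) ++ (Q₁ ++ Q₂)) :=
            (head_lcm a b).append_right _
          have e3 : ((C b a ++ Q₁) ++ Q₂) ~~ (Y' ++ P₂) := E2.symm
          have c1 : (a :: (U' ++ (P₁ ++ Q₂))) ~~ (a :: ((C a b ++ Q₁) ++ Q₂)) := by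
            have := e1.append_left [a]
            simpa [List.append_assoc] using this
          have c3 : (b :: ((C b a ++ Q₁) ++ Q₂)) ~~ (b :: (Y' ++ P₂)) := by
            have := e3.append_left [b]
            simpa using this
          have c2 : (a :: ((C a b ++ Q₁) ++ Q₂)) ~~ (b :: ((C b a ++ Q₁) ++ Q₂)) := by
            simpa [List.append_assoc] using e2
          simpa using (c1.trans c2).trans c3
        · intro x hx
          rcases List.mem_append.mp hx with hx | hx
          · rcases mP₁ x hx with hx | hx
            · exact Or.inl (by simp [hx])
            · rcases C_mem hx with rfl | rfl
              · exact Or.inl (by simp)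
              · exact Or.inr (by simp)
          · rcases mQ₂ x hx with hx | hx
            · exact Or.inr (by simp [hx])
            · rcases List.mem_append.mp hx with hx | hx
              · rcases C_mem hx with rfl | rfl
                · exact Or.inr (by simp)
                · exact Or.inl (by simp)
              · rcases mQ₁ x hx with hx | hx
                · exact Or.inl (by simp [hx])
                · rcases C_mem hx with rfl | rfl
                  · exact Or.inl (by simp)
                  · exact Or.inr (by simp)
        · intro x hx
          rcases mP₂ x hx with hx | hx
          · exact Or.inr (by simp [hx])
          · rcases List.mem_append.mp hx with hx | hx
            · rcases C_mem hx with rfl | rfl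
              · exact Or.inr (by simp)
              · exact Or.inl (by simp)
            · rcases mQ₁ x hx with hx | hx
              · exact Or.inl (by simp [hx])
              · rcases C_mem hx with rfl | rfl
                · exact Or.inl (by simp)
                · exact Or.inr (by simp)
        · intro X' Z' h'
          simp only [List.cons_append] at h'
          obtain ⟨s, hX', hZ'⟩ := useML h'
          obtain ⟨w₁, hx1, hs1⟩ := univ₁ X' s hX'
          have h'' : (Y' ++ Z') ~~ ((C b a ++ Q₁) ++ w₁) := by
            refine hZ'.trans ?_
            have := hs1.append_left (C b a)
            simpa [List.append_assoc] using this
          obtain ⟨w₂, hz2, hw2⟩ := univ₂ Z' w₁ h''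
          refine ⟨w₂, ?_, hz2⟩
          refine hx1.trans ?_
          have := hw2.append_left P₁
          simpa [List.append_assoc] using this

/-- The word `[0, 1, ..., m-1]`. -/
def Rw (m : ℕ) : List ℕ := List.range m

/-- The Garside word: `Dw m` represents `Δ_m`. -/
def Dw : ℕ → List ℕ
  | 0 => []
  | m + 1 => Rw m ++ Dw m

theorem mem_Rw {x m : ℕ} (h : x ∈ Rw m) : x < m := List.mem_range.mp h

theorem mem_Dw {x : ℕ} : ∀ {m : ℕ}, x ∈ Dw m → x + 2 ≤ m := by
  intro m
  induction m with
  | zero => simp [Dw]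
  | succ m ih =>
      intro hx
      rcases List.mem_append.mp hx with hx | hx
      · have := mem_Rw hx; omega
      · have := ih hx; omega

theorem Rw_succ (m : ℕ) : Rw (m + 1) = Rw m ++ [m] := by
  simp [Rw, List.range_succ]

theorem range_swap : ∀ m i : ℕ, i + 1 < m → ((Rw m ++ [i]) ~~ ((i + 1) :: Rw m)) := by
  intro m
  induction m with
  | zero => intro i h; omega
  | succ m ih =>
      intro i h
      by_cases him : i + 1 < m
      · have s1 : ((Rw m ++ [m]) ++ [i]) ~~ ((Rw m ++ [i]) ++ [m]) := by
          have := swap_far (Or.inr (by omega : i + 2 ≤ m)) (Rw m) ([] : List ℕ)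
          simpa [List.append_assoc] using this
        have s2 : ((Rw m ++ [i]) ++ [m]) ~~ (((i + 1) :: Rw m) ++ [m]) :=
          (ih i him).append_right [m]
        rw [Rw_succ]
        have := s1.trans s2
        simpa [List.append_assoc] using this
      · have hmi : m = i + 1 := by omega
        subst hmi
        have hRw2 : Rw (i + 2) = Rw i ++ [i, i + 1] := by
          rw [Rw_succ, Rw_succ]; simp [List.append_assoc]
        rw [hRw2]
        have s1 : ((Rw i ++ [i, i+1]) ++ [i]) ~~ (Rw i ++ [i+1, i, i+1]) := by
          have := braid_mid i (Rw i) ([] : List ℕ)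
          simpa [List.append_assoc] using this
        have s2 : (Rw i ++ ((i+1) :: [i, i+1])) ~~ ((i+1) :: (Rw i ++ [i, i+1])) := by
          have hfar : ∀ x ∈ Rw i, x + 2 ≤ i + 1 ∨ (i + 1) + 2 ≤ x := by
            intro x hx; left; have := mem_Rw hx; omega
          exact (far_pass hfar [i, i+1]).symm
        refine s1.trans ?_
        simpa [List.append_assoc] using s2

theorem Dw_far {m : ℕ} : ∀ x ∈ Dw m, x + 2 ≤ m ∨ m + 2 ≤ x :=
  fun x hx => Or.inl (mem_Dw hx)

theorem Dw_alt : ∀ m : ℕ, Dw (m + 1) ~~ (Dw m ++ (Rw m).reverse) := by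
  intro m
  induction m with
  | zero => simp [Dw, Rw, Eqv.rfl]
  | succ m ih =>
      -- Dw (m+2) = Rw (m+1) ++ Dw (m+1)
      have e1 : (Dw (m+1) ++ (Rw (m+1)).reverse)
          = (Rw m ++ Dw m) ++ (m :: (Rw m).reverse) := by
        show (Rw m ++ Dw m) ++ (Rw (m+1)).reverse = _
        rw [Rw_succ]
        simp
      have e2 : ((Rw m ++ Dw m) ++ (m :: (Rw m).reverse))
          ~~ ((Rw m ++ (m :: Dw m)) ++ (Rw m).reverse) := by
        have hfar : ∀ x ∈ Dw m, x + 2 ≤ m ∨ m + 2 ≤ x := by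
          intro x hx; left; have := mem_Dw hx; omega
        have := ((far_pass hfar ([] : List ℕ)).symm.append_left (Rw m)).append_right
          ((Rw m).reverse)
        simpa [List.append_assoc] using this
      have e3 : ((Rw m ++ (m :: Dw m)) ++ (Rw m).reverse)
          = (Rw (m+1)) ++ (Dw m ++ (Rw m).reverse) := by
        rw [Rw_succ]; simp [List.append_assoc]
      have e4 : ((Rw (m+1)) ++ (Dw m ++ (Rw m).reverse)) ~~ (Rw (m+1) ++ Dw (m+1)) :=
        ih.symm.append_left _
      show (Rw (m+1) ++ Dw (m+1)) ~~ _
      rw [e1]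
      refine ((e2.trans ?_).trans e4).symm
      rw [e3]
      exact Eqv.rfl

/-- The flip lemma: `σ_a Δ_m = Δ_m σ_{m-2-a}` at the word level. -/
theorem flip_word : ∀ m a b : ℕ, a + 2 ≤ m → a + b = m - 2 →
    ((a :: Dw m) ~~ (Dw m ++ [b])) := by
  intro m
  induction m with
  | zero => intro a b h; omega
  | succ m ih =>
      intro a b h hab
      by_cases ha : 1 ≤ a
      · -- use range_swap and ih
        have h1 : (a :: Rw m) ~~ (Rw m ++ [a - 1]) := by
          have := (range_swap m (a - 1) (by omega)).symm
          have e : a - 1 + 1 = a := by omega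
          rwa [e] at this
        have h2 : ((a - 1) :: Dw m) ~~ (Dw m ++ [b]) := ih (a - 1) b (by omega) (by omega)
        show (a :: (Rw m ++ Dw m)) ~~ ((Rw m ++ Dw m) ++ [b])
        calc (a :: (Rw m ++ Dw m)) ~~ ((Rw m ++ [a - 1]) ++ Dw m) := by
              simpa [List.append_assoc] using h1.append_right (Dw m)
          _ ~~ (Rw m ++ (Dw m ++ [b])) := by
              simpa [List.append_assoc] using h2.append_left (Rw m)
          _ ~~ ((Rw m ++ Dw m) ++ [b]) := by simp [List.append_assoc, Eqv.rfl]
      · -- a = 0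
        have ha0 : a = 0 := by omega
        subst ha0
        by_cases hm : m = 1
        · subst hm
          have hb : b = 0 := by omega
          subst hb
          show ((0 : ℕ) :: (Rw 1 ++ Dw 1)) ~~ ((Rw 1 ++ Dw 1) ++ [0])
          simp [Rw, Dw, List.range_succ, Eqv.rfl]
        · have hm2 : 2 ≤ m := by omega
          have hb : b = m - 1 := by omega
          subst hb
          -- [0] ++ Dw (m+1) ~~ [0] ++ Dw m ++ Rw m.rev ~~ Dw m ++ [m-2] ++ Rw m.rev
          --   ~~ Dw m ++ Rw m.rev ++ [m-1]  ~~ Dw (m+1) ++ [m-1]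
          have e1 : ((0 : ℕ) :: Dw (m+1)) ~~ (0 :: (Dw m ++ (Rw m).reverse)) :=
            (Dw_alt m).append_left [0]
          have e2 : ((0 : ℕ) :: Dw m) ~~ (Dw m ++ [m - 2]) := ih 0 (m-2) (by omega) (by omega)
          have e3 : ((0 :: Dw m) ++ (Rw m).reverse) ~~ ((Dw m ++ [m - 2]) ++ (Rw m).reverse) :=
            e2.append_right _
          have e4 : (((m : ℕ) - 2) :: (Rw m).reverse) ~~ ((Rw m).reverse ++ [m - 1]) := by
            have := (range_swap m (m - 2) (by omega)).reverse
            simp only [List.reverse_append, List.reverse_cons, List.reverse_nil,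
              List.nil_append] at this
            have e : m - 2 + 1 = m - 1 := by omega
            rwa [e] at this
          have e5 : ((Dw m ++ [m - 2]) ++ (Rw m).reverse)
              ~~ (Dw m ++ ((Rw m).reverse ++ [m - 1])) := by
            have := e4.append_left (Dw m)
            simpa [List.append_assoc] using this
          have e6 : (Dw m ++ ((Rw m).reverse ++ [m - 1]))
              ~~ (Dw (m+1) ++ [m - 1]) := by
            have := (Dw_alt m).symm.append_right [m - 1]
            simpa [List.append_assoc] using this
          calc ((0 : ℕ) :: Dw (m+1)) ~~ (0 :: (Dw m ++ (Rw m).reverse)) := e1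
            _ ~~ ((Dw m ++ [m - 2]) ++ (Rw m).reverse) := by
                simpa [List.append_assoc] using e3
            _ ~~ (Dw m ++ ((Rw m).reverse ++ [m - 1])) := e5
            _ ~~ (Dw (m+1) ++ [m - 1]) := e6

/-- word version of the flip lemma. -/
theorem flip_word_all {m : ℕ} : ∀ (w : List ℕ), (∀ x ∈ w, x + 2 ≤ m) →
    ((w ++ Dw m) ~~ (Dw m ++ w.map (fun a => m - 2 - a))) := by
  intro w
  induction w with
  | nil => simp [Eqv.rfl]
  | cons a w ih =>
      intro hw
      have h1 : (a :: (w ++ Dw m)) ~~ (a :: (Dw m ++ w.map (fun a => m - 2 - a))) :=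
        (ih (fun x hx => hw x (by simp [hx]))).append_left [a]
      have h2 : ((a :: Dw m) ++ w.map (fun a => m - 2 - a))
          ~~ ((Dw m ++ [m - 2 - a]) ++ w.map (fun a => m - 2 - a)) :=
        (flip_word m a (m - 2 - a) (hw a (by simp)) (by
          have := hw a (by simp); omega)).append_right _
      simp only [List.cons_append]
      refine h1.trans ?_
      have := h2
      simpa [List.append_assoc] using this

/-- `Δ_m^2` commutes with every letter `a ≤ m-2`, at the word level. -/
theorem delta2_comm {m a : ℕ} (h : a + 2 ≤ m) :
    ((a :: (Dw m ++ Dw m)) ~~ ((Dw m ++ Dw m) ++ [a])) := by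
  have hφ : m - 2 - (m - 2 - a) = a := by omega
  have h1 : ((a :: Dw m) ++ Dw m) ~~ ((Dw m ++ [m - 2 - a]) ++ Dw m) :=
    (flip_word m a (m - 2 - a) h (by omega)).append_right _
  have h2 : (((m : ℕ) - 2 - a) :: Dw m) ~~ (Dw m ++ [a]) := by
    have := flip_word m (m - 2 - a) a (by omega) (by omega)
    exact this
  have h3 : (Dw m ++ ((m - 2 - a) :: Dw m)) ~~ (Dw m ++ (Dw m ++ [a])) :=
    h2.append_left _
  calc (a :: (Dw m ++ Dw m)) ~~ ((Dw m ++ [m - 2 - a]) ++ Dw m) := by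
        simpa [List.append_assoc] using h1
    _ ~~ (Dw m ++ (Dw m ++ [a])) := by simpa [List.append_assoc] using h3
    _ ~~ ((Dw m ++ Dw m) ++ [a]) := by simp [List.append_assoc, Eqv.rfl]

theorem delta2_comm_word {m : ℕ} {w : List ℕ} (h : ∀ x ∈ w, x + 2 ≤ m) :
    ((w ++ (Dw m ++ Dw m)) ~~ ((Dw m ++ Dw m) ++ w)) := by
  induction w with
  | nil => simp [Eqv.rfl]
  | cons a w ih =>
      have h1 : (a :: (w ++ (Dw m ++ Dw m))) ~~ (a :: ((Dw m ++ Dw m) ++ w)) :=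
        (ih (fun x hx => h x (by simp [hx]))).append_left [a]
      have h2 : ((a :: (Dw m ++ Dw m)) ++ w) ~~ (((Dw m ++ Dw m) ++ [a]) ++ w) :=
        (delta2_comm (h a (by simp))).append_right w
      simp only [List.cons_append]
      refine h1.trans ?_
      simpa [List.append_assoc] using h2

/-- every letter divides `Δ_m` on the left. -/
theorem letter_dvd_Dw : ∀ m a : ℕ, a + 2 ≤ m → ∃ c, (Dw m ~~ (a :: c)) ∧ ∀ x ∈ c, x + 2 ≤ m := by
  intro m
  induction m with
  | zero => intro a h; omega
  | succ m ih =>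
      intro a h
      by_cases ha : a = 0
      · subst ha
        have hm : 1 ≤ m := by omega
        have e : Rw m = 0 :: (List.range (m - 1)).map Nat.succ := by
          rw [Rw, show m = (m-1)+1 by omega, List.range_succ_eq_map]
          norm_num
        refine ⟨(List.range (m-1)).map Nat.succ ++ Dw m, ?_, ?_⟩
        · show (Rw m ++ Dw m) ~~ _
          rw [e]; simp [Eqv.rfl]
        · intro x hx
          rcases List.mem_append.mp hx with hx | hx
          · obtain ⟨y, hy, rfl⟩ := List.mem_map.mp hx
            have := List.mem_range.mp hy; omega
          · have := mem_Dw hx; omega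
      · obtain ⟨c', hc', hmem⟩ := ih (a - 1) (by omega)
        have h1 : (Rw m ++ Dw m) ~~ (Rw m ++ ((a - 1) :: c')) := hc'.append_left _
        have h2 : ((Rw m ++ [a - 1]) ++ c') ~~ ((a :: Rw m) ++ c') := by
          have := (range_swap m (a - 1) (by omega)).append_right c'
          have e : a - 1 + 1 = a := by omega
          rwa [e] at this
        refine ⟨Rw m ++ c', ?_, ?_⟩
        · show (Rw m ++ Dw m) ~~ _
          refine h1.trans ?_
          have := h2
          simpa [List.append_assoc] using this
        · intro x hx
          rcases List.mem_append.mp hx with hx | hx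
          · have := mem_Rw hx; omega
          · have := hmem x hx; omega

/-- the two-sided complement of a letter in `Δ_m ^ 2`. -/
theorem exists_compl {m a : ℕ} (h : a + 2 ≤ m) :
    ∃ c, ((a :: c) ~~ (Dw m ++ Dw m)) ∧ ((c ++ [a]) ~~ (Dw m ++ Dw m)) ∧
      ∀ x ∈ c, x + 2 ≤ m := by
  obtain ⟨c', hc', hmem⟩ := letter_dvd_Dw m a h
  refine ⟨c' ++ Dw m, ?_, ?_, ?_⟩
  · have := hc'.symm.append_right (Dw m)
    simpa [List.append_assoc] using this
  · -- from [a] ++ (c' ++ Dw m) ++ [a] ~~ δ² ++ [a] ~~ [a] ++ δ² and cancel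
    have h1 : ((a :: (c' ++ Dw m)) ++ [a]) ~~ ((Dw m ++ Dw m) ++ [a]) := by
      have := hc'.symm.append_right (Dw m)
      have h1' : (a :: (c' ++ Dw m)) ~~ (Dw m ++ Dw m) := by
        simpa [List.append_assoc] using this
      exact h1'.append_right [a]
    have h2 : ((Dw m ++ Dw m) ++ [a]) ~~ (a :: (Dw m ++ Dw m)) := (delta2_comm h).symm
    have h3 : ([a] ++ ((c' ++ Dw m) ++ [a])) ~~ ([a] ++ (Dw m ++ Dw m)) := by
      simpa [List.append_assoc] using h1.trans h2
    exact cancel_left h3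
  · intro x hx
    rcases List.mem_append.mp hx with hx | hx
    · exact hmem x hx
    · exact mem_Dw hx

/-! ### The braid monoid as a quotient, and the embedding into `B n` -/

instance eqvSetoid : Setoid (List ℕ) := ⟨Eqv, ⟨Eqv.refl, Eqv.symm, Eqv.trans⟩⟩

def M : Type := Quotient eqvSetoid

def M.mk (w : List ℕ) : M := Quotient.mk eqvSetoid w

theorem M.sound {w w' : List ℕ} (h : w ~~ w') : M.mk w = M.mk w' := Quotient.sound h

theorem M.exact {w w' : List ℕ} (h : M.mk w = M.mk w') : w ~~ w' := Quotient.exact h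

def M.lmul (y : List ℕ) : M → M :=
  Quotient.map (fun w => y ++ w) (fun _ _ h => h.append_left y)

theorem M.lmul_mk (y w : List ℕ) : M.lmul y (M.mk w) = M.mk (y ++ w) := rfl

theorem M.lmul_lmul (y z : List ℕ) (m : M) :
    M.lmul y (M.lmul z m) = M.lmul (y ++ z) m := by
  induction m using Quotient.ind
  simp [M.lmul, List.append_assoc]
  rfl

theorem M.lmul_congr {y y' : List ℕ} (h : y ~~ y') (m : M) : M.lmul y m = M.lmul y' m := by
  induction m using Quotient.ind with
  | _ w => exact Quotient.sound (h.append_right w)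

/-- the ladder relation defining the colimit `X n`. -/
def XRel (n : ℕ) : (ℕ × M) → (ℕ × M) → Prop :=
  fun p q => q = (p.1 + 1, M.lmul (Dw n ++ Dw n) p.2)

def X (n : ℕ) : Type := Quot (XRel n)

def X.mk (n : ℕ) (k : ℕ) (m : M) : X n := Quot.mk (XRel n) (k, m)

noncomputable def compl (n a : ℕ) : List ℕ :=
  if h : a + 2 ≤ n then (exists_compl h).choose else []

theorem compl_spec1 {n a : ℕ} (h : a + 2 ≤ n) :
    (a :: compl n a) ~~ (Dw n ++ Dw n) := by
  rw [compl, dif_pos h]; exact (exists_compl h).choose_spec.1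

theorem compl_spec2 {n a : ℕ} (h : a + 2 ≤ n) :
    (compl n a ++ [a]) ~~ (Dw n ++ Dw n) := by
  rw [compl, dif_pos h]; exact (exists_compl h).choose_spec.2.1

theorem compl_spec3 {n a : ℕ} (h : a + 2 ≤ n) : ∀ x ∈ compl n a, x + 2 ≤ n := by
  rw [compl, dif_pos h]; exact (exists_compl h).choose_spec.2.2

def actF (a : ℕ) : ℕ × M → ℕ × M := fun p => (p.1, M.lmul [a] p.2)

noncomputable def invF (n a : ℕ) : ℕ × M → ℕ × M := fun p => (p.1 + 1, M.lmul (compl n a) p.2)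

theorem lmul_comm_delta2 {n : ℕ} {y : List ℕ} (hy : ∀ x ∈ y, x + 2 ≤ n) (m : M) :
    M.lmul y (M.lmul (Dw n ++ Dw n) m) = M.lmul (Dw n ++ Dw n) (M.lmul y m) := by
  rw [M.lmul_lmul, M.lmul_lmul]
  exact M.lmul_congr (delta2_comm_word hy) m

noncomputable def act (n a : ℕ) (ha : a + 2 ≤ n) : X n → X n :=
  Quot.map (actF a) (by
    rintro ⟨k, m⟩ q rfl
    show (k + 1, M.lmul [a] (M.lmul (Dw n ++ Dw n) m))
        = (k + 1, M.lmul (Dw n ++ Dw n) (M.lmul [a] m))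
    exact Prod.ext rfl (lmul_comm_delta2 (by simpa using ha) m))

noncomputable def inv (n a : ℕ) (ha : a + 2 ≤ n) : X n → X n :=
  Quot.map (invF n a) (by
    rintro ⟨k, m⟩ q rfl
    show (k + 1 + 1, M.lmul (compl n a) (M.lmul (Dw n ++ Dw n) m))
        = (k + 1 + 1, M.lmul (Dw n ++ Dw n) (M.lmul (compl n a) m))
    exact Prod.ext rfl (lmul_comm_delta2 (compl_spec3 ha) m))

theorem act_inv (n a : ℕ) (ha : a + 2 ≤ n) (x : X n) : act n a ha (inv n a ha x) = x := by
  induction x using Quot.ind with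
  | _ p =>
    show Quot.mk _ (p.1 + 1, M.lmul [a] (M.lmul (compl n a) p.2)) = Quot.mk _ p
    rw [M.lmul_lmul]
    have : M.lmul ([a] ++ compl n a) p.2 = M.lmul (Dw n ++ Dw n) p.2 :=
      M.lmul_congr (by simpa using compl_spec1 ha) p.2
    rw [this]
    exact (Quot.sound (show XRel n p _ from rfl)).symm

theorem inv_act (n a : ℕ) (ha : a + 2 ≤ n) (x : X n) : inv n a ha (act n a ha x) = x := by
  induction x using Quot.ind with
  | _ p =>
    show Quot.mk _ (p.1 + 1, M.lmul (compl n a) (M.lmul [a] p.2)) = Quot.mk _ p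
    rw [M.lmul_lmul]
    have : M.lmul (compl n a ++ [a]) p.2 = M.lmul (Dw n ++ Dw n) p.2 :=
      M.lmul_congr (compl_spec2 ha) p.2
    rw [this]
    exact (Quot.sound (show XRel n p _ from rfl)).symm

noncomputable def permA (n a : ℕ) (ha : a + 2 ≤ n) : Equiv.Perm (X n) :=
  ⟨act n a ha, inv n a ha, inv_act n a ha, act_inv n a ha⟩

theorem permA_apply (n a : ℕ) (ha : a + 2 ≤ n) (k : ℕ) (w : List ℕ) :
    permA n a ha (X.mk n k (M.mk w)) = X.mk n k (M.mk (a :: w)) := rfl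


theorem X.mk_congr {n k : ℕ} {m m' : M} (h : m = m') : X.mk n k m = X.mk n k m' := by rw [h]

/-- the relations of `B n` hold among the permutations `permA`. -/
theorem perm_rels {n : ℕ} (hn : 3 ≤ n) :
    ∀ r ∈ braidRels (n - 1),
      (FreeGroup.lift (fun i : Fin (n-1) => permA n i.val (by omega))) r = 1 := by
  rintro r ⟨i, j, hr | hr⟩
  all_goals have hi : (i : ℕ) + 2 ≤ n := by have := i.isLt; omega
  all_goals have hj : (j : ℕ) + 2 ≤ n := by have := j.isLt; omega
  · obtain ⟨hij, rfl⟩ := hr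
    simp only [map_mul, map_inv, FreeGroup.lift_apply_of]
    rw [mul_inv_eq_one, mul_inv_eq_iff_eq_mul]
    ext x
    induction x using Quot.ind with
    | _ p =>
      obtain ⟨k, m⟩ := p
      induction m using Quotient.ind with
      | _ w =>
        show permA n i.val hi (permA n j.val hj (X.mk n k (M.mk w)))
            = permA n j.val hj (permA n i.val hi (X.mk n k (M.mk w)))
        rw [permA_apply, permA_apply, permA_apply, permA_apply]
        refine X.mk_congr (M.sound ?_)
        have := Step.comm [] w i.val j.val hij
        simpa using this.eqv
  · obtain ⟨hij, rfl⟩ := hr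
    simp only [map_mul, map_inv, FreeGroup.lift_apply_of]
    rw [mul_inv_eq_one, mul_inv_eq_iff_eq_mul, mul_inv_eq_iff_eq_mul]
    ext x
    induction x using Quot.ind with
    | _ p =>
      obtain ⟨k, m⟩ := p
      induction m using Quotient.ind with
      | _ w =>
        show permA n i.val hi (permA n j.val hj (permA n i.val hi (X.mk n k (M.mk w))))
            = permA n j.val hj (permA n i.val hi (permA n j.val hj (X.mk n k (M.mk w))))
        simp only [permA_apply]
        refine X.mk_congr (M.sound ?_)
        have := Step.braid [] w i.val
        rw [hij]
        simpa using this.eqv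

/-! ### The evaluation of positive words in `B n`, and injectivity -/

/-- evaluation of a (shifted) positive word in `B n`: letter `i` is `σ_{i+1}`. -/
def pw (n : ℕ) (w : List ℕ) : B n := (w.map (fun i => gen n (i + 1))).prod

theorem pw_nil (n : ℕ) : pw n [] = 1 := rfl

theorem pw_cons (n : ℕ) (a : ℕ) (w : List ℕ) : pw n (a :: w) = gen n (a + 1) * pw n w := by
  simp [pw]

theorem pw_append (n : ℕ) (u w : List ℕ) : pw n (u ++ w) = pw n u * pw n w := by
  simp [pw]

theorem gen_eq_of {n i : ℕ} (h : i + 2 ≤ n) :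
    gen n (i + 1) = PresentedGroup.of (rels := braidRels (n - 1)) ⟨i, by omega⟩ := by
  rw [gen, dif_pos (by omega : i + 1 - 1 < n - 1)]
  norm_num

/-- the homomorphism from `B n` to permutations of `X n`. -/
noncomputable def ψ {n : ℕ} (hn : 3 ≤ n) : B n →* Equiv.Perm (X n) :=
  PresentedGroup.toGroup (perm_rels hn)

theorem ψ_gen {n : ℕ} (hn : 3 ≤ n) {a : ℕ} (ha : a + 2 ≤ n) :
    ψ hn (gen n (a + 1)) = permA n a ha := by
  rw [gen_eq_of ha]
  exact PresentedGroup.toGroup.of (perm_rels hn)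

theorem ψ_eval {n : ℕ} (hn : 3 ≤ n) (w : List ℕ) (hw : ∀ x ∈ w, x + 2 ≤ n)
    (k : ℕ) (u : List ℕ) :
    ψ hn (pw n w) (X.mk n k (M.mk u)) = X.mk n k (M.mk (w ++ u)) := by
  induction w with
  | nil => simp [pw_nil]
  | cons a w ih =>
      rw [pw_cons, map_mul]
      have ha : a + 2 ≤ n := hw a (by simp)
      rw [Equiv.Perm.mul_apply, ih (fun x hx => hw x (by simp [hx]))]
      rw [ψ_gen hn ha, permA_apply]
      simp

/-- δ-power words -/
def dpow (n : ℕ) : ℕ → List ℕ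
  | 0 => []
  | k + 1 => (Dw n ++ Dw n) ++ dpow n k

theorem dpow_comm (n k : ℕ) : dpow n k ++ (Dw n ++ Dw n) = (Dw n ++ Dw n) ++ dpow n k := by
  induction k with
  | zero => simp [dpow]
  | succ k ih => simp only [dpow, List.append_assoc, ih]

def FX (n : ℕ) : ℕ × M → ℕ × M := fun p => (p.1 + 1, M.lmul (Dw n ++ Dw n) p.2)

theorem FX_iter (n : ℕ) : ∀ (i k : ℕ) (m : M),
    (FX n)^[i] (k, m) = (k + i, M.lmul (dpow n i) m) := by
  intro i
  induction i with
  | zero =>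
      intro k m
      simp only [Function.iterate_zero, id, dpow]
      induction m using Quotient.ind with
      | _ w => rfl
  | succ i ih =>
      intro k m
      rw [Function.iterate_succ_apply, FX, ih (k+1) (M.lmul (Dw n ++ Dw n) m)]
      rw [M.lmul_lmul]
      rw [show k + 1 + i = k + (i+1) by omega, dpow_comm]
      rfl

theorem eqvGen_FX {n : ℕ} {p q : ℕ × M} (h : Relation.EqvGen (XRel n) p q) :
    ∃ i j, (FX n)^[i] p = (FX n)^[j] q := by
  induction h with
  | rel x y hxy => exact ⟨1, 0, by rw [Function.iterate_one, Function.iterate_zero, id, hxy]; rfl⟩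
  | refl x => exact ⟨0, 0, rfl⟩
  | symm x y _ ih => obtain ⟨i, j, hij⟩ := ih; exact ⟨j, i, hij.symm⟩
  | trans x y z _ _ ih₁ ih₂ =>
      obtain ⟨i, j, h₁⟩ := ih₁
      obtain ⟨i', j', h₂⟩ := ih₂
      refine ⟨i' + i, j + j', ?_⟩
      rw [Function.iterate_add_apply, h₁, ← Function.iterate_add_apply,
        show i' + j = j + i' by omega, Function.iterate_add_apply, h₂,
        ← Function.iterate_add_apply]

/-- THE EMBEDDING THEOREM: positive words equal in `B n` are equivalent. -/
theorem pw_inj {n : ℕ} (hn : 3 ≤ n) {w w' : List ℕ}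
    (hw : ∀ x ∈ w, x + 2 ≤ n) (hw' : ∀ x ∈ w', x + 2 ≤ n)
    (h : pw n w = pw n w') : w ~~ w' := by
  have h1 : ψ hn (pw n w) (X.mk n 0 (M.mk [])) = ψ hn (pw n w') (X.mk n 0 (M.mk [])) := by
    rw [h]
  rw [ψ_eval hn w hw, ψ_eval hn w' hw'] at h1
  simp only [List.append_nil] at h1
  have h2 := Quot.eqvGen_exact h1
  obtain ⟨i, j, hij⟩ := eqvGen_FX h2
  rw [FX_iter, FX_iter] at hij
  have hij1 : (0 + i : ℕ) = 0 + j := congrArg Prod.fst hij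
  have hij2 : M.lmul (dpow n i) (M.mk w) = M.lmul (dpow n j) (M.mk w') := congrArg Prod.snd hij
  have : i = j := by omega
  subst this
  rw [M.lmul_mk, M.lmul_mk] at hij2
  exact cancel_left (M.exact hij2)

/-! ### Dictionary: `Bplus`, `delta`, `flip` in terms of words -/

theorem rel_one {n : ℕ} {r : FreeGroup (Fin (n-1))} (hr : r ∈ braidRels (n - 1)) :
    (QuotientGroup.mk' (Subgroup.normalClosure (braidRels (n-1))) r : B n) = 1 := by
  rw [QuotientGroup.mk'_apply, QuotientGroup.eq_one_iff]
  exact Subgroup.subset_normalClosure hr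

theorem mk'_of {n : ℕ} (x : Fin (n-1)) :
    (QuotientGroup.mk' (Subgroup.normalClosure (braidRels (n-1))) (FreeGroup.of x) : B n)
      = PresentedGroup.of x := rfl

theorem gen_comm {n i j : ℕ} (hij : i + 2 ≤ j) (hj : j + 2 ≤ n) :
    gen n (i+1) * gen n (j+1) = gen n (j+1) * gen n (i+1) := by
  have hi' : i < n - 1 := by omega
  have hj' : j < n - 1 := by omega
  have hr : (FreeGroup.of (⟨i, hi'⟩ : Fin (n-1)) * FreeGroup.of (⟨j, hj'⟩ : Fin (n-1)) *
      (FreeGroup.of (⟨i, hi'⟩ : Fin (n-1)))⁻¹ * (FreeGroup.of (⟨j, hj'⟩ : Fin (n-1)))⁻¹)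
      ∈ braidRels (n - 1) := ⟨⟨i, hi'⟩, ⟨j, hj'⟩, Or.inl ⟨by simpa using hij, rfl⟩⟩
  have h1 := rel_one hr
  simp only [map_mul, map_inv, mk'_of] at h1
  rw [gen_eq_of (by omega : i + 2 ≤ n), gen_eq_of (by omega : j + 2 ≤ n)]
  replace h1 : (PresentedGroup.of (⟨i, hi'⟩ : Fin (n-1)) * PresentedGroup.of ⟨j, hj'⟩ *
      (PresentedGroup.of ⟨i, hi'⟩)⁻¹ * (PresentedGroup.of ⟨j, hj'⟩)⁻¹ : B n) = 1 := h1
  rw [mul_inv_eq_one, mul_inv_eq_iff_eq_mul] at h1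
  exact h1

theorem gen_braid {n i : ℕ} (hi : i + 3 ≤ n) :
    gen n (i+1) * gen n (i+2) * gen n (i+1) = gen n (i+2) * gen n (i+1) * gen n (i+2) := by
  have hi' : i < n - 1 := by omega
  have hj' : i + 1 < n - 1 := by omega
  have hr : (FreeGroup.of (⟨i, hi'⟩ : Fin (n-1)) * FreeGroup.of (⟨i+1, hj'⟩ : Fin (n-1)) *
      FreeGroup.of (⟨i, hi'⟩ : Fin (n-1)) * (FreeGroup.of (⟨i+1, hj'⟩ : Fin (n-1)))⁻¹ *
      (FreeGroup.of (⟨i, hi'⟩ : Fin (n-1)))⁻¹ * (FreeGroup.of (⟨i+1, hj'⟩ : Fin (n-1)))⁻¹)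
      ∈ braidRels (n - 1) := ⟨⟨i, hi'⟩, ⟨i+1, hj'⟩, Or.inr ⟨by simp, rfl⟩⟩
  have h1 := rel_one hr
  simp only [map_mul, map_inv, mk'_of] at h1
  show gen n (i+1) * gen n (i+1+1) * gen n (i+1) = gen n (i+1+1) * gen n (i+1) * gen n (i+1+1)
  rw [gen_eq_of (by omega : i + 2 ≤ n), gen_eq_of (by omega : (i+1) + 2 ≤ n)]
  replace h1 : (PresentedGroup.of (⟨i, hi'⟩ : Fin (n-1)) * PresentedGroup.of ⟨i+1, hj'⟩ *
      PresentedGroup.of ⟨i, hi'⟩ * (PresentedGroup.of ⟨i+1, hj'⟩)⁻¹ *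
      (PresentedGroup.of ⟨i, hi'⟩)⁻¹ * (PresentedGroup.of ⟨i+1, hj'⟩)⁻¹ : B n) = 1 := h1
  rw [mul_inv_eq_one, mul_inv_eq_iff_eq_mul, mul_inv_eq_iff_eq_mul] at h1
  rw [h1]

theorem pw_step {n : ℕ} {w w' : List ℕ} (h : Step w w') (hw : ∀ x ∈ w, x + 2 ≤ n) :
    pw n w = pw n w' := by
  cases h with
  | comm u v i j hij =>
      have hj : j + 2 ≤ n := hw j (by simp)
      have e : gen n (i+1) * gen n (j+1) = gen n (j+1) * gen n (i+1) := gen_comm hij hj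
      have e2 : u ++ i :: j :: v = u ++ [i, j] ++ v := by simp
      have e3 : u ++ j :: i :: v = u ++ [j, i] ++ v := by simp
      rw [e2, e3, pw_append, pw_append, pw_append, pw_append]
      congr 1
      congr 1
      simp only [pw, List.map_cons, List.map_nil, List.prod_cons, List.prod_nil, mul_one]
      exact e
  | braid u v i =>
      have hi : i + 3 ≤ n := by
        have := hw (i+1) (by simp); omega
      have e := gen_braid hi
      have e2 : u ++ i :: (i+1) :: i :: v = u ++ [i, i+1, i] ++ v := by simp
      have e3 : u ++ (i+1) :: i :: (i+1) :: v = u ++ [i+1, i, i+1] ++ v := by simp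
      rw [e2, e3, pw_append, pw_append, pw_append, pw_append]
      congr 1
      congr 1
      simp only [pw, List.map_cons, List.map_nil, List.prod_cons, List.prod_nil, mul_one,
        ← mul_assoc]
      exact e

theorem pw_eqv {n : ℕ} {w w' : List ℕ} (h : w ~~ w') (hw : ∀ x ∈ w, x + 2 ≤ n) :
    pw n w = pw n w' := by
  induction h using Relation.ReflTransGen.head_induction_on with
  | refl => rfl
  | head hrel hchain ih =>
      rename_i x y
      have hy : ∀ z ∈ y, z + 2 ≤ n := fun z hz =>
        hw z (hrel.elim (fun h => h.mem hz) (fun h => h.mem' hz))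
      have e1 : pw n x = pw n y :=
        hrel.elim (fun h => pw_step h hw) (fun h => (pw_step h hy).symm)
      exact e1.trans (ih hy)

theorem mem_Bplus_iff {n k : ℕ} {x : B n} :
    x ∈ Bplus n k ↔ ∃ w : List ℕ, (∀ j ∈ w, j + 2 ≤ k) ∧ x = pw n w := by
  constructor
  · intro hx
    induction hx using Submonoid.closure_induction with
    | mem y hy =>
        obtain ⟨i, h1, h2, rfl⟩ := hy
        refine ⟨[i-1], ?_, ?_⟩
        · intro j hj; simp at hj; omega
        · simp [pw, show i - 1 + 1 = i by omega]
    | one => exact ⟨[], by simp, rfl⟩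
    | mul a b _ _ iha ihb =>
        obtain ⟨w1, hw1, rfl⟩ := iha
        obtain ⟨w2, hw2, rfl⟩ := ihb
        refine ⟨w1 ++ w2, ?_, (pw_append n w1 w2).symm⟩
        intro j hj
        rcases List.mem_append.mp hj with hj | hj
        · exact hw1 j hj
        · exact hw2 j hj
  · rintro ⟨w, hw, rfl⟩
    induction w with
    | nil => exact one_mem _
    | cons j w ih =>
        rw [pw_cons]
        refine mul_mem (Submonoid.subset_closure ⟨j + 1, by omega, ?_, rfl⟩) ?_
        · have := hw j (by simp); omega
        · exact ih (fun x hx => hw x (by simp [hx]))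

theorem row_eq {n : ℕ} (j : ℕ) :
    ((List.range' 1 j).map (gen n)).prod = pw n (Rw j) := by
  have h1 : List.range' 1 j = (List.range j).map (1 + ·) := by
    rw [List.range_eq_range', List.map_add_range']
  rw [h1, pw, Rw, List.map_map]
  congr 1
  apply List.map_congr_left
  intro a _
  simp [Nat.add_comm]

theorem delta_eq_pw (n : ℕ) : ∀ k, delta n k = pw n (Dw k) := by
  intro k
  induction k with
  | zero => simp [delta, Dw, pw]
  | succ m ih =>
      cases m with
      | zero => simp [delta, Dw, Rw, pw]
      | succ m' =>
          show delta n (m' + 2) = pw n (Dw (m' + 2))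
          have e1 : delta n (m' + 2)
              = ((List.range' 1 (m' + 1)).map (gen n)).prod * delta n (m' + 1) := by
            rw [delta, delta]
            have : (m' + 2) - 1 = (m' + 1 - 1) + 1 := by omega
            rw [this, List.range_succ]
            simp [List.reverse_append]
          rw [e1, ih]
          show _ = pw n (Rw (m' + 1) ++ Dw (m' + 1))
          rw [pw_append, row_eq]

theorem flip_zero (n : ℕ) (x : B n) : flip n 0 x = x := by simp [flip]

theorem flip_succ (n k : ℕ) (x : B n) : flip n (k+1) x = flip n 1 (flip n k x) := by
  simp only [flip, pow_succ', pow_one, mul_inv_rev, mul_assoc]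
  group

theorem flip_one_pw {n : ℕ} (hn : 3 ≤ n) {w : List ℕ} (hw : ∀ x ∈ w, x + 2 ≤ n) :
    flip n 1 (pw n w) = pw n (w.map (fun a => n - 2 - a)) := by
  have hφw : ∀ x ∈ w.map (fun a => n - 2 - a), x + 2 ≤ n := by
    intro x hx
    obtain ⟨a, _, rfl⟩ := List.mem_map.mp hx
    omega
  have key : ((w.map (fun a => n - 2 - a)) ++ Dw n)
      ~~ (Dw n ++ (w.map (fun a => n - 2 - a)).map (fun a => n - 2 - a)) :=
    flip_word_all _ hφw
  have e2 : (w.map (fun a => n - 2 - a)).map (fun a => n - 2 - a) = w := by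
    rw [List.map_map]
    conv_rhs => rw [← List.map_id w]
    apply List.map_congr_left
    intro a ha
    have := hw a ha
    simp; omega
  rw [e2] at key
  have hD : ∀ x ∈ Dw n, x + 2 ≤ n := fun x hx => mem_Dw hx
  have hkey : pw n ((w.map (fun a => n - 2 - a)) ++ Dw n) = pw n (Dw n ++ w) := by
    apply pw_eqv key
    intro x hx
    rcases List.mem_append.mp hx with hx | hx
    · exact hφw x hx
    · exact hD x hx
  rw [pw_append, pw_append] at hkey
  -- pw (φ w) * Δ = Δ * pw w  hence  flip (pw w) = pw (φ w)
  rw [flip, pow_one, delta_eq_pw]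
  rw [← hkey, mul_assoc, mul_inv_cancel, mul_one]

def LSet (n k : ℕ) : Set ℕ := if k % 2 = 0 then {j | j + 3 ≤ n} else {j | 1 ≤ j ∧ j + 2 ≤ n}

theorem LSet_sub {n k j : ℕ} (h : j ∈ LSet n k) : j + 2 ≤ n := by
  unfold LSet at h; split at h <;> simp only [Set.mem_setOf_eq] at h <;> omega

theorem phm_mapsto {n k j : ℕ} (hn : 3 ≤ n) (h : j ∈ LSet n k) : n - 2 - j ∈ LSet n (k+1) := by
  unfold LSet at h ⊢
  rcases Nat.even_or_odd k with he | ho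
  · have h0 : k % 2 = 0 := Nat.even_iff.mp he
    have h1 : (k+1) % 2 = 1 := by omega
    rw [if_pos h0] at h
    rw [if_neg (by omega)]
    simp only [Set.mem_setOf_eq] at h ⊢
    omega
  · have h0 : k % 2 = 1 := Nat.odd_iff.mp ho
    rw [if_neg (by omega)] at h
    rw [if_pos (by omega)]
    simp only [Set.mem_setOf_eq] at h ⊢
    omega

theorem phm_surj {n k j' : ℕ} (hn : 3 ≤ n) (h : j' ∈ LSet n (k+1)) :
    ∃ j ∈ LSet n k, n - 2 - j = j' := by
  refine ⟨n - 2 - j', ?_, ?_⟩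
  · unfold LSet at h ⊢
    rcases Nat.even_or_odd k with he | ho
    · have h0 : k % 2 = 0 := Nat.even_iff.mp he
      rw [if_neg (by omega)] at h
      rw [if_pos h0]
      simp only [Set.mem_setOf_eq] at h ⊢
      omega
    · have h0 : k % 2 = 1 := Nat.odd_iff.mp ho
      rw [if_pos (by omega)] at h
      rw [if_neg (by omega)]
      simp only [Set.mem_setOf_eq] at h ⊢
      omega
  · have := LSet_sub h; omega

theorem exists_preimage_word {n k : ℕ} (hn : 3 ≤ n) :
    ∀ w' : List ℕ, (∀ j ∈ w', j ∈ LSet n (k+1)) →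
      ∃ w : List ℕ, (∀ j ∈ w, j ∈ LSet n k) ∧ w.map (fun a => n - 2 - a) = w' := by
  intro w'
  induction w' with
  | nil => exact fun _ => ⟨[], by simp⟩
  | cons j' w' ihw =>
      intro hw'
      obtain ⟨w, hw, hmap⟩ := ihw (fun j hj => hw' j (by simp [hj]))
      obtain ⟨j, hj, hjj⟩ := phm_surj hn (hw' j' (by simp))
      refine ⟨j :: w, ?_, by simp [hmap, hjj]⟩
      intro x hx
      rcases List.mem_cons.mp hx with rfl | hx
      · exact hj
      · exact hw x hx

theorem flipSet_char {n : ℕ} (hn : 3 ≤ n) (k : ℕ) :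
    flipSet n k = {x | ∃ w, (∀ j ∈ w, j ∈ LSet n k) ∧ x = pw n w} := by
  induction k with
  | zero =>
      ext x
      simp only [flipSet, Set.mem_image, Set.mem_setOf_eq]
      constructor
      · rintro ⟨y, hy, rfl⟩
        obtain ⟨w, hw, rfl⟩ := mem_Bplus_iff.mp hy
        refine ⟨w, ?_, (flip_zero n _)⟩
        intro j hj
        have := hw j hj
        simp [LSet]; omega
      · rintro ⟨w, hw, rfl⟩
        refine ⟨pw n w, ?_, flip_zero n _⟩
        apply mem_Bplus_iff.mpr
        refine ⟨w, ?_, rfl⟩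
        intro j hj
        have := hw j hj
        simp [LSet] at this; omega
  | succ k ih =>
      ext x
      constructor
      · intro hx
        rw [flipSet] at hx
        obtain ⟨y, hy, rfl⟩ := hx
        have hy' : flip n k y ∈ flipSet n k := ⟨y, hy, rfl⟩
        rw [ih] at hy'
        obtain ⟨w, hw, hw2⟩ := hy'
        simp only [Set.mem_setOf_eq]
        refine ⟨w.map (fun a => n - 2 - a), ?_, ?_⟩
        · intro j hj
          obtain ⟨a, ha, rfl⟩ := List.mem_map.mp hj
          exact phm_mapsto hn (hw a ha)
        · rw [flip_succ, hw2, flip_one_pw hn (fun x hx => LSet_sub (hw x hx))]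
      · intro hx
        simp only [Set.mem_setOf_eq] at hx
        obtain ⟨w', hw', rfl⟩ := hx
        obtain ⟨w, hw, rfl⟩ := exists_preimage_word hn w' hw'
        have hwsub : pw n w ∈ flipSet n k := by
          rw [ih]; exact ⟨w, hw, rfl⟩
        rw [flipSet] at hwsub ⊢
        obtain ⟨y, hy, hyy⟩ := hwsub
        refine ⟨y, hy, ?_⟩
        rw [flip_succ, hyy, flip_one_pw hn (fun x hx => LSet_sub (hw x hx))]

theorem pw_eq_one {n : ℕ} (hn : 3 ≤ n) {w : List ℕ} (hw : ∀ x ∈ w, x + 2 ≤ n)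
    (h : pw n w = 1) : w = [] := by
  have h2 : pw n w = pw n [] := by rw [h]; rfl
  have h3 := pw_inj hn hw (by simp) h2
  have := h3.length
  simpa using this

/-- proved: existence and uniqueness of the maximal right divisor. -/
theorem main_thm (n k : ℕ) (hn : 3 ≤ n) (β : B n) (hβ : β ∈ Bplus n n) :
    ∃! β₁ : B n, IsMaxRDivIn n (flipSet n k) β β₁ := by
  obtain ⟨W, hW, hβW⟩ := mem_Bplus_iff.mp hβ
  -- the set of "reversed divisor words"
  set A : Set ℕ := LSet n k with hA
  set Tset : Set (List ℕ) :=
    {v | (∀ j ∈ v, j ∈ A) ∧ ∃ z, (W.reverse ~~ (v ++ z)) ∧ (∀ j ∈ z, j + 2 ≤ n)} with hTset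
  have hWr : ∀ j ∈ W.reverse, j + 2 ≤ n := by
    intro j hj; exact hW j (List.mem_reverse.mp hj)
  -- S-to-T
  have StoT : ∀ γ : B n, γ ∈ flipSet n k → RDiv n γ β →
      ∃ v ∈ Tset, γ = pw n v.reverse := by
    intro γ hγ hdiv
    rw [flipSet_char hn] at hγ
    obtain ⟨w, hw, rfl⟩ := hγ
    have hwn : ∀ j ∈ w, j + 2 ≤ n := fun j hj => LSet_sub (hw j hj)
    rw [RDiv] at hdiv
    obtain ⟨x, hx, hxe⟩ := mem_Bplus_iff.mp hdiv
    have hWxw : pw n W = pw n (x ++ w) := by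
      rw [pw_append, ← hxe, hβW, inv_mul_cancel_right]
    have hxwn : ∀ j ∈ x ++ w, j + 2 ≤ n := by
      intro j hj
      rcases List.mem_append.mp hj with hj | hj
      · exact hx j hj
      · exact hwn j hj
    have hEq := pw_inj hn hW hxwn hWxw
    refine ⟨w.reverse, ⟨?_, x.reverse, ?_, ?_⟩, by rw [List.reverse_reverse]⟩
    · intro j hj; exact hw j (List.mem_reverse.mp hj)
    · have := hEq.reverse
      rwa [List.reverse_append] at this
    · intro j hj; exact hx j (List.mem_reverse.mp hj)
  -- T-to-S
  have TtoS : ∀ v ∈ Tset, pw n v.reverse ∈ flipSet n k ∧ RDiv n (pw n v.reverse) β := by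
    rintro v ⟨hv, z, hz, hzn⟩
    have hvn : ∀ j ∈ v, j + 2 ≤ n := fun j hj => LSet_sub (hv j hj)
    constructor
    · rw [flipSet_char hn]
      exact ⟨v.reverse, fun j hj => hv j (List.mem_reverse.mp hj), rfl⟩
    · rw [RDiv]
      have h1 : W ~~ (z.reverse ++ v.reverse) := by
        have := hz.reverse
        rwa [List.reverse_append, List.reverse_reverse] at this
      have h2 : pw n W = pw n z.reverse * pw n v.reverse := by
        rw [← pw_append]
        exact pw_eqv h1 hW
      have h3 : β * (pw n v.reverse)⁻¹ = pw n z.reverse := by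
        rw [hβW, h2, mul_inv_cancel_right]
      rw [h3]
      exact mem_Bplus_iff.mpr ⟨z.reverse, fun j hj => hzn j (List.mem_reverse.mp hj), rfl⟩
  -- pick a maximal-length element of Tset
  have hTne : ([] : List ℕ) ∈ Tset :=
    ⟨by simp, W.reverse, by simp [Eqv.rfl], hWr⟩
  have hTbd : ∀ v ∈ Tset, v.length ≤ W.length := by
    rintro v ⟨hv, z, hz, -⟩
    have := hz.length
    simp only [List.length_append, List.length_reverse] at this
    omega
  have hLne : (List.length '' Tset).Nonempty := ⟨0, [], hTne, rfl⟩
  have hLbd : BddAbove (List.length '' Tset) := by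
    refine ⟨W.length, ?_⟩
    rintro l ⟨v, hv, rfl⟩
    exact hTbd v hv
  obtain ⟨v', hv', hlv'⟩ := Nat.sSup_mem hLne hLbd
  have hmax : ∀ v ∈ Tset, v.length ≤ v'.length := by
    intro v hv
    rw [hlv']
    exact le_csSup hLbd ⟨v, hv, rfl⟩
  -- directedness: every element of Tset divides v'
  have hdir : ∀ v ∈ Tset, ∃ d, (v' ~~ (v ++ d)) ∧ ∀ j ∈ d, j + 2 ≤ n := by
    rintro v ⟨hv, z, hz, hzn⟩
    obtain ⟨hv'A, z', hz', hz'n⟩ := hv'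
    have hcm : (v ++ z) ~~ (v' ++ z') := hz.symm.trans hz'
    obtain ⟨P, Q, hPQ, hPm, hQm, huniv⟩ := WW (v ++ z).length v z v' z' (le_refl _) hcm
    obtain ⟨e, he1, he2⟩ := huniv z z' hcm
    have hPA : ∀ j ∈ P, j ∈ A := by
      intro j hj
      rcases hPm j hj with hj | hj
      · exact hv j hj
      · exact hv'A j hj
    -- q := v ++ P belongs to Tset
    have hq : (v ++ P) ∈ Tset := by
      refine ⟨?_, e, ?_, ?_⟩
      · intro j hj
        rcases List.mem_append.mp hj with hj | hj
        · exact hv j hj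
        · exact hPA j hj
      · refine hz.trans ?_
        have := he1.append_left v
        simpa [List.append_assoc] using this
      · -- letters of e are in range: they occur in v' ++ (Q ++ e) ~ Wr? use z ~~ P ++ e
        intro j hj
        have hjz : j ∈ z := he1.mem (by simp [hj])
        exact hzn j hjz
    -- maximality of length forces Q = []
    have hlen1 : (v ++ P).length ≤ v'.length := hmax _ hq
    have hlen2 := hPQ.length
    simp only [List.length_append] at hlen1 hlen2
    have hQnil : Q = [] := by
      have : Q.length = 0 := by omega
      exact List.length_eq_zero_iff.mp this
    rw [hQnil, List.append_nil] at hPQ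
    exact ⟨P, hPQ.symm, fun j hj => LSet_sub (hPA j hj)⟩
  -- the maximal right divisor
  refine ⟨pw n v'.reverse, ⟨(TtoS v' hv').1, (TtoS v' hv').2, ?_⟩, ?_⟩
  · -- maximality
    intro γ hγ hdiv
    obtain ⟨v, hvT, rfl⟩ := StoT γ hγ hdiv
    obtain ⟨d, hd, hdn⟩ := hdir v hvT
    rw [RDiv]
    have h1 : v'.reverse ~~ (d.reverse ++ v.reverse) := by
      have := hd.reverse
      rwa [List.reverse_append] at this
    have hv'n : ∀ j ∈ v'.reverse, j + 2 ≤ n := by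
      intro j hj
      exact LSet_sub (hv'.1 j (List.mem_reverse.mp hj))
    have h2 : pw n v'.reverse = pw n d.reverse * pw n v.reverse := by
      rw [← pw_append]
      exact pw_eqv h1 hv'n
    rw [h2, mul_inv_cancel_right]
    exact mem_Bplus_iff.mpr ⟨d.reverse, fun j hj => hdn j (List.mem_reverse.mp hj), rfl⟩
  · -- uniqueness
    intro y hy
    obtain ⟨hyX, hydiv, hymax⟩ := hy
    have hβ₁X := (TtoS v' hv').1
    have hβ₁div := (TtoS v' hv').2
    have hmax₁ : ∀ γ ∈ flipSet n k, RDiv n γ β → RDiv n γ (pw n v'.reverse) := by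
      intro γ hγ hdiv
      obtain ⟨v, hvT, rfl⟩ := StoT γ hγ hdiv
      obtain ⟨d, hd, hdn⟩ := hdir v hvT
      rw [RDiv]
      have h1 : v'.reverse ~~ (d.reverse ++ v.reverse) := by
        have := hd.reverse
        rwa [List.reverse_append] at this
      have hv'n : ∀ j ∈ v'.reverse, j + 2 ≤ n := by
        intro j hj
        exact LSet_sub (hv'.1 j (List.mem_reverse.mp hj))
      have h2 : pw n v'.reverse = pw n d.reverse * pw n v.reverse := by
        rw [← pw_append]
        exact pw_eqv h1 hv'n
      rw [h2, mul_inv_cancel_right]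
      exact mem_Bplus_iff.mpr ⟨d.reverse, fun j hj => hdn j (List.mem_reverse.mp hj), rfl⟩
    -- mutual divisibility
    have h1 : RDiv n y (pw n v'.reverse) := hmax₁ y hyX hydiv
    have h2 : RDiv n (pw n v'.reverse) y := hymax _ hβ₁X hβ₁div
    rw [RDiv] at h1 h2
    obtain ⟨x1, hx1, he1⟩ := mem_Bplus_iff.mp h1
    obtain ⟨x2, hx2, he2⟩ := mem_Bplus_iff.mp h2
    have hprod : pw n (x1 ++ x2) = 1 := by
      rw [pw_append, ← he1, ← he2]
      group
    have hrange : ∀ j ∈ x1 ++ x2, j + 2 ≤ n := by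
      intro j hj
      rcases List.mem_append.mp hj with hj | hj
      · exact hx1 j hj
      · exact hx2 j hj
    have := pw_eq_one hn hrange hprod
    have hx1nil : x1 = [] := by
      rcases List.append_eq_nil_iff.mp this with ⟨h1', h2'⟩
      exact h1'
    rw [hx1nil] at he1
    have h0 : pw n v'.reverse * y⁻¹ = 1 := by rw [he1]; rfl
    exact (mul_inv_eq_one.mp h0).symm

/-- For `n ≥ 3` and `k ≥ 0`, every `β ∈ B⁺_n` admits a unique maximal
right divisor lying in `φ_n^k(B⁺_{n-1})`. -/
theorem exists_unique_max_right_divisor_in_flip (n k : ℕ) (hn : 3 ≤ n)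
    (β : B n) (hβ : β ∈ Bplus n n) :
    ∃! β₁ : B n, IsMaxRDivIn n (flipSet n k) β β₁ :=
  main_thm n k hn β hβ

end Braid
end

section
/- For n ≥ 3, the submonoid B⁺_{n−1} of B⁺_n is closed under left lcm: any two elements β, γ of B⁺_{n−1} admit in B⁺_n a least common multiple with respect to left divisibility (an element δ with β and γ left dividing δ, and δ left dividing every common such multiple), and this element lies in B⁺_{n−1}. -/
namespace Braid

namespace Garside

/-- Words over ℕ; letter `i` stands for the Artin generator `σ_{i+1}`. -/
abbrev W := List ℕ

/-- Elementary braid relations. -/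
inductive Brel : W → W → Prop
  | far (i j : ℕ) (h : i + 2 ≤ j) : Brel [i, j] [j, i]
  | near (i : ℕ) : Brel [i, i+1, i] [i+1, i, i+1]

/-- One rewriting step. -/
def Step (u v : W) : Prop :=
  ∃ p a b q, (Brel a b ∨ Brel b a) ∧ u = p ++ a ++ q ∧ v = p ++ b ++ q

/-- Positive braid-word equivalence. -/
def Eqv : W → W → Prop := Relation.ReflTransGen Step

theorem Step.symm {u v : W} (h : Step u v) : Step v u := by
  obtain ⟨p, a, b, q, hr, h1, h2⟩ := h
  exact ⟨p, b, a, q, hr.symm, h2, h1⟩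

theorem Eqv.refl (u : W) : Eqv u u := Relation.ReflTransGen.refl

theorem Eqv.trans {u v w : W} (h1 : Eqv u v) (h2 : Eqv v w) : Eqv u w :=
  Relation.ReflTransGen.trans h1 h2

theorem Eqv.symm {u v : W} (h : Eqv u v) : Eqv v u :=
  (@Relation.ReflTransGen.stdSymm _ _ ⟨fun _ _ hs => hs.symm⟩).symm _ _ h

theorem Step.eqv {u v : W} (h : Step u v) : Eqv u v := Relation.ReflTransGen.single h

theorem Step.append {u v p q : W} (h : Step u v) : Step (p ++ u ++ q) (p ++ v ++ q) := by
  obtain ⟨p', a, b, q', hr, h1, h2⟩ := h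
  exact ⟨p ++ p', a, b, q' ++ q, hr, by simp [h1], by simp [h2]⟩

theorem Eqv.append {u v p q : W} (h : Eqv u v) : Eqv (p ++ u ++ q) (p ++ v ++ q) := by
  induction h with
  | refl => exact Eqv.refl _
  | tail _ hs ih => exact ih.trans (Step.append hs).eqv

theorem Eqv.append_congr {u v x y : W} (h : Eqv u v) (h' : Eqv x y) :
    Eqv (u ++ x) (v ++ y) := by
  have h1 : Eqv ([] ++ u ++ x) ([] ++ v ++ x) := Eqv.append h
  have h2 : Eqv (v ++ x ++ []) (v ++ y ++ []) := Eqv.append h'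
  simpa using h1.trans (by simpa using h2)

theorem Eqv.append_left {u v : W} (p : W) (h : Eqv u v) : Eqv (p ++ u) (p ++ v) :=
  Eqv.append_congr (Eqv.refl p) h

theorem Eqv.append_right {u v : W} (q : W) (h : Eqv u v) : Eqv (u ++ q) (v ++ q) :=
  Eqv.append_congr h (Eqv.refl q)

theorem Eqv.cons {u v : W} (a : ℕ) (h : Eqv u v) : Eqv (a :: u) (a :: v) :=
  Eqv.append_left [a] h

theorem Brel.length {a b : W} (h : Brel a b) : a.length = b.length := by
  cases h <;> rfl

theorem Step.length {u v : W} (h : Step u v) : u.length = v.length := by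
  obtain ⟨p, a, b, q, hr, h1, h2⟩ := h
  have : a.length = b.length := by
    rcases hr with h | h
    · exact h.length
    · exact h.length.symm
  simp [h1, h2, this]

theorem Eqv.length {u v : W} (h : Eqv u v) : u.length = v.length := by
  induction h with
  | refl => rfl
  | tail _ hs ih => exact ih.trans hs.length

theorem Brel.mem {a b : W} {x : ℕ} (h : Brel a b) : x ∈ a ↔ x ∈ b := by
  cases h <;> simp <;> tauto

theorem Step.mem {u v : W} {x : ℕ} (h : Step u v) : x ∈ u ↔ x ∈ v := by
  obtain ⟨p, a, b, q, hr, h1, h2⟩ := h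
  have : x ∈ a ↔ x ∈ b := by
    rcases hr with h | h
    · exact h.mem
    · exact h.mem.symm
  simp [h1, h2, this]

theorem Eqv.mem {u v : W} {x : ℕ} (h : Eqv u v) : x ∈ u ↔ x ∈ v := by
  induction h with
  | refl => exact Iff.rfl
  | tail _ hs ih => exact ih.trans hs.mem

/-- Swap two far generators (at the head). -/
theorem eqv_swap {i j : ℕ} (h : i + 2 ≤ j ∨ j + 2 ≤ i) (t : W) :
    Eqv (i :: j :: t) (j :: i :: t) := by
  rcases h with h | h
  · exact (Step.eqv ⟨[], [i, j], [j, i], t, Or.inl (Brel.far i j h), rfl, rfl⟩)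
  · exact (Step.eqv ⟨[], [i, j], [j, i], t, Or.inr (Brel.far j i h), rfl, rfl⟩)

/-- The braid relation for adjacent generators (at the head). -/
theorem eqv_braid {i j : ℕ} (h : j = i + 1 ∨ i = j + 1) (t : W) :
    Eqv (i :: j :: i :: t) (j :: i :: j :: t) := by
  rcases h with h | h
  · subst h
    exact (Step.eqv ⟨[], [i, i+1, i], [i+1, i, i+1], t, Or.inl (Brel.near i), rfl, rfl⟩)
  · subst h
    exact (Step.eqv ⟨[], [j+1, j, j+1], [j, j+1, j], t, Or.inr (Brel.near j), rfl, rfl⟩)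

/-- The complement: `lcm(σ_i, σ_j) = σ_i · (comp i j)`. -/
def comp (i j : ℕ) : W :=
  if i = j then [] else if i + 2 ≤ j ∨ j + 2 ≤ i then [j] else [j, i]

theorem comp_self (i : ℕ) : comp i i = [] := by simp [comp]

theorem comp_far {i j : ℕ} (h : i + 2 ≤ j ∨ j + 2 ≤ i) : comp i j = [j] := by
  have : i ≠ j := by omega
  simp [comp, this, h]

theorem comp_near {i j : ℕ} (h : j = i + 1 ∨ i = j + 1) : comp i j = [j, i] := by
  have h1 : i ≠ j := by omega
  have h2 : ¬ (i + 2 ≤ j ∨ j + 2 ≤ i) := by omega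
  simp [comp, h1, h2]

/-- Case trichotomy for a pair of letters. -/
theorem letter_cases (i j : ℕ) :
    i = j ∨ (i + 2 ≤ j ∨ j + 2 ≤ i) ∨ (j = i + 1 ∨ i = j + 1) := by omega

theorem eqv_lcm_comm (i j : ℕ) (t : W) :
    Eqv (i :: (comp i j ++ t)) (j :: (comp j i ++ t)) := by
  rcases letter_cases i j with h | h | h
  · subst h; exact Eqv.refl _
  · rw [comp_far h, comp_far (by omega : j + 2 ≤ i ∨ i + 2 ≤ j)]
    exact eqv_swap h t
  · rw [comp_near h, comp_near (by omega : i = j + 1 ∨ j = i + 1)]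
    exact eqv_braid h t


/-- The inductive hypothesis used throughout the proof of the key lemma. -/
def KeyIH (L : ℕ) : Prop :=
  ∀ (u v : W) (i j : ℕ), u.length < L → Eqv (i :: u) (j :: v) →
    ∃ w, Eqv u (comp i j ++ w) ∧ Eqv v (comp j i ++ w)

theorem cancel_of_IH {L : ℕ} (IH : KeyIH L) {a : ℕ} {x y : W}
    (hx : x.length < L) (h : Eqv (a :: x) (a :: y)) : Eqv x y := by
  obtain ⟨w, h1, h2⟩ := IH x y a a hx h
  rw [comp_self] at h1 h2
  simp only [List.nil_append] at h1 h2
  exact h1.trans h2.symm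

set_option maxHeartbeats 1000000 in
theorem CLfar {L : ℕ} (IH : KeyIH L) (i k j : ℕ) (hfar : i + 2 ≤ k ∨ k + 2 ≤ i)
    (ρ w₁ : W) (hlen : ρ.length < L) (E : Eqv (i :: ρ) (comp k j ++ w₁)) :
    ∃ w, Eqv (k :: ρ) (comp i j ++ w) ∧ Eqv (comp j k ++ w₁) (comp j i ++ w) := by
  rcases letter_cases k j with hkj | hkj | hkj
  · -- k = j
    subst hkj
    rw [comp_self] at E ⊢
    simp only [List.nil_append] at E ⊢
    rw [comp_far hfar, comp_far (by omega : k + 2 ≤ i ∨ i + 2 ≤ k)]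
    exact ⟨ρ, Eqv.refl _, E.symm⟩
  · -- far k j
    rw [comp_far hkj] at E
    simp only [List.cons_append, List.nil_append] at E
    rcases letter_cases j i with hji | hji | hji
    · -- j = i
      subst hji
      have hρ : Eqv ρ w₁ := cancel_of_IH IH hlen E
      rw [comp_self]
      rw [comp_far (by omega : j + 2 ≤ k ∨ k + 2 ≤ j)]
      simp only [List.cons_append, List.nil_append]
      exact ⟨k :: ρ, Eqv.refl _, (Eqv.cons k hρ).symm⟩
    · -- far j i
      obtain ⟨w₂, hρ, hw₁⟩ := IH ρ w₁ i j hlen E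
      rw [comp_far (by omega : i + 2 ≤ j ∨ j + 2 ≤ i)] at hρ ⊢
      rw [comp_far (by omega : j + 2 ≤ i ∨ i + 2 ≤ j)] at hw₁ ⊢
      rw [comp_far (by omega : j + 2 ≤ k ∨ k + 2 ≤ j)]
      simp only [List.cons_append, List.nil_append] at hρ hw₁ ⊢
      refine ⟨k :: w₂, ?_, ?_⟩
      · exact (Eqv.cons k hρ).trans (eqv_swap (by omega) w₂)
      · exact (Eqv.cons k hw₁).trans (eqv_swap (by omega) w₂)
    · -- near j i
      obtain ⟨w₂, hρ, hw₁⟩ := IH ρ w₁ i j hlen E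
      rw [comp_near (by omega : j = i + 1 ∨ i = j + 1)] at hρ ⊢
      rw [comp_near (by omega : i = j + 1 ∨ j = i + 1)] at hw₁ ⊢
      rw [comp_far (by omega : j + 2 ≤ k ∨ k + 2 ≤ j)]
      simp only [List.cons_append, List.nil_append] at hρ hw₁ ⊢
      refine ⟨k :: w₂, ?_, ?_⟩
      · exact (Eqv.cons k hρ).trans
          ((eqv_swap (by omega) (i :: w₂)).trans (Eqv.cons j (eqv_swap (by omega) w₂)))
      · exact (Eqv.cons k hw₁).trans
          ((eqv_swap (by omega) (j :: w₂)).trans (Eqv.cons i (eqv_swap (by omega) w₂)))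
  · -- near k j
    rw [comp_near hkj] at E
    simp only [List.cons_append, List.nil_append] at E
    have hlw : w₁.length + 1 = ρ.length := by
      have := E.length; simp at this; omega
    obtain ⟨w₂, hρ, hkw⟩ := IH ρ (k :: w₁) i j hlen E
    rcases letter_cases j i with hji | hji | hji
    · omega
    · -- far j i
      rw [comp_far (by omega : i + 2 ≤ j ∨ j + 2 ≤ i)] at hρ ⊢
      rw [comp_far (by omega : j + 2 ≤ i ∨ i + 2 ≤ j)] at hkw ⊢
      rw [comp_near (by omega : k = j + 1 ∨ j = k + 1)]
      simp only [List.cons_append, List.nil_append] at hρ hkw ⊢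
      obtain ⟨w₃, hw₁, hw₂⟩ := IH w₁ w₂ k i (by omega) hkw
      rw [comp_far (by omega : k + 2 ≤ i ∨ i + 2 ≤ k)] at hw₁
      rw [comp_far (by omega : i + 2 ≤ k ∨ k + 2 ≤ i)] at hw₂
      simp only [List.cons_append, List.nil_append] at hw₁ hw₂
      refine ⟨k :: j :: w₃, ?_, ?_⟩
      · -- k::ρ ~ k::j::w₂ ~ k::j::k::w₃ ~ j::k::j::w₃
        exact (Eqv.cons k hρ).trans ((Eqv.cons k (Eqv.cons j hw₂)).trans
          (eqv_braid (by omega) w₃))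
      · -- k::j::w₁ ~ k::j::i::w₃ ~ k::i::j::w₃ ~ i::k::j::w₃
        exact (Eqv.cons k (Eqv.cons j hw₁)).trans
          ((Eqv.cons k (eqv_swap (by omega) w₃)).trans (eqv_swap (by omega) (j :: w₃)))
    · -- near j i
      rw [comp_near (by omega : j = i + 1 ∨ i = j + 1)] at hρ ⊢
      rw [comp_near (by omega : i = j + 1 ∨ j = i + 1)] at hkw ⊢
      rw [comp_near (by omega : k = j + 1 ∨ j = k + 1)]
      simp only [List.cons_append, List.nil_append] at hρ hkw ⊢
      obtain ⟨w₃, hw₁, hjw₂⟩ := IH w₁ (j :: w₂) k i (by omega) hkw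
      rw [comp_far (by omega : k + 2 ≤ i ∨ i + 2 ≤ k)] at hw₁
      rw [comp_far (by omega : i + 2 ≤ k ∨ k + 2 ≤ i)] at hjw₂
      simp only [List.cons_append, List.nil_append] at hw₁ hjw₂
      have hw₂len : w₂.length + 2 = ρ.length := by
        have := hρ.length; simp at this; omega
      obtain ⟨w₄, hw₂, hw₃⟩ := IH w₂ w₃ j k (by omega) hjw₂
      rw [comp_near (by omega : k = j + 1 ∨ j = k + 1)] at hw₂
      rw [comp_near (by omega : j = k + 1 ∨ k = j + 1)] at hw₃
      simp only [List.cons_append, List.nil_append] at hw₂ hw₃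
      refine ⟨k :: j :: i :: w₄, ?_, ?_⟩
      · -- k::ρ ~ k::j::i::w₂ ~ k::j::i::k::j::w₄ ~ ... ~ j::i::k::j::i::w₄
        have c1 : Eqv (k :: ρ) (k :: j :: i :: k :: j :: w₄) :=
          Eqv.cons k (hρ.trans (Eqv.cons j (Eqv.cons i hw₂)))
        have c2 : Eqv (k :: j :: i :: k :: j :: w₄) (k :: j :: k :: i :: j :: w₄) :=
          Eqv.cons k (Eqv.cons j (eqv_swap (by omega) (j :: w₄)))
        have c3 : Eqv (k :: j :: k :: i :: j :: w₄) (j :: k :: j :: i :: j :: w₄) :=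
          eqv_braid (by omega) (i :: j :: w₄)
        have c4 : Eqv (j :: k :: j :: i :: j :: w₄) (j :: k :: i :: j :: i :: w₄) :=
          Eqv.cons j (Eqv.cons k (eqv_braid (by omega) w₄))
        have c5 : Eqv (j :: k :: i :: j :: i :: w₄) (j :: i :: k :: j :: i :: w₄) :=
          Eqv.cons j (eqv_swap (by omega) (j :: i :: w₄))
        exact c1.trans (c2.trans (c3.trans (c4.trans c5)))
      · -- k::j::w₁ ~ k::j::i::j::k::w₄ ~ ... ~ i::j::k::j::i::w₄
        have c1 : Eqv (k :: j :: w₁) (k :: j :: i :: j :: k :: w₄) :=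
          Eqv.cons k (Eqv.cons j (hw₁.trans (Eqv.cons i hw₃)))
        have c2 : Eqv (k :: j :: i :: j :: k :: w₄) (k :: i :: j :: i :: k :: w₄) :=
          Eqv.cons k (eqv_braid (by omega) (k :: w₄))
        have c3 : Eqv (k :: i :: j :: i :: k :: w₄) (i :: k :: j :: i :: k :: w₄) :=
          eqv_swap (by omega) (j :: i :: k :: w₄)
        have c4 : Eqv (i :: k :: j :: i :: k :: w₄) (i :: k :: j :: k :: i :: w₄) :=
          Eqv.cons i (Eqv.cons k (Eqv.cons j (eqv_swap (by omega) w₄)))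
        have c5 : Eqv (i :: k :: j :: k :: i :: w₄) (i :: j :: k :: j :: i :: w₄) :=
          Eqv.cons i (eqv_braid (by omega) (i :: w₄))
        exact c1.trans (c2.trans (c3.trans (c4.trans c5)))

set_option maxHeartbeats 1000000 in
theorem CLnear {L : ℕ} (IH : KeyIH L) (i k j : ℕ) (hnear : k = i + 1 ∨ i = k + 1)
    (ρ w₁ : W) (hlen : ρ.length + 1 < L) (E : Eqv (i :: k :: ρ) (comp k j ++ w₁)) :
    ∃ w, Eqv (k :: i :: ρ) (comp i j ++ w) ∧ Eqv (comp j k ++ w₁) (comp j i ++ w) := by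
  rcases letter_cases k j with hkj | hkj | hkj
  · -- k = j
    subst hkj
    rw [comp_self] at E ⊢
    simp only [List.nil_append] at E ⊢
    rw [comp_near (by omega : i = k + 1 ∨ k = i + 1),
      comp_near (by omega : k = i + 1 ∨ i = k + 1)]
    simp only [List.cons_append, List.nil_append]
    exact ⟨ρ, Eqv.refl _, E.symm⟩
  · -- far k j : j ∉ {i,k} possible; j = i? far k j and near i k: j could equal i? |k-j|≥2, |i-k|=1: j=i ⇒ |k-i|≥2 contradiction
    have hji' : j ≠ i := by omega
    rw [comp_far hkj] at E
    simp only [List.cons_append, List.nil_append] at E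
    obtain ⟨w₂, h1, h2⟩ := IH (k :: ρ) w₁ i j (by simpa using hlen) E
    rcases letter_cases j i with hji | hji | hji
    · omega
    · -- far j i
      rw [comp_far (by omega : i + 2 ≤ j ∨ j + 2 ≤ i)] at h1 ⊢
      rw [comp_far (by omega : j + 2 ≤ i ∨ i + 2 ≤ j)] at h2 ⊢
      rw [comp_far (by omega : j + 2 ≤ k ∨ k + 2 ≤ j)]
      simp only [List.cons_append, List.nil_append] at h1 h2 ⊢
      obtain ⟨w₃, h3, h4⟩ := IH ρ w₂ k j (by omega) h1
      rw [comp_far (by omega : k + 2 ≤ j ∨ j + 2 ≤ k)] at h3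
      rw [comp_far (by omega : j + 2 ≤ k ∨ k + 2 ≤ j)] at h4
      simp only [List.cons_append, List.nil_append] at h3 h4
      refine ⟨k :: i :: w₃, ?_, ?_⟩
      · -- k::i::ρ ~ k::i::j::w₃ ~ k::j::i::w₃ ~ j::k::i::w₃
        exact (Eqv.cons k (Eqv.cons i h3)).trans
          ((Eqv.cons k (eqv_swap (by omega) w₃)).trans (eqv_swap (by omega) (i :: w₃)))
      · -- k::w₁ ~ k::i::w₂ ~ k::i::k::w₃ ~ i::k::i::w₃
        exact (Eqv.cons k h2).trans ((Eqv.cons k (Eqv.cons i h4)).trans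
          (eqv_braid (by omega) w₃))
    · -- near j i
      rw [comp_near (by omega : j = i + 1 ∨ i = j + 1)] at h1 ⊢
      rw [comp_near (by omega : i = j + 1 ∨ j = i + 1)] at h2 ⊢
      rw [comp_far (by omega : j + 2 ≤ k ∨ k + 2 ≤ j)]
      simp only [List.cons_append, List.nil_append] at h1 h2 ⊢
      obtain ⟨w₃, h3, h4⟩ := IH ρ (i :: w₂) k j (by omega) h1
      rw [comp_far (by omega : k + 2 ≤ j ∨ j + 2 ≤ k)] at h3
      rw [comp_far (by omega : j + 2 ≤ k ∨ k + 2 ≤ j)] at h4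
      simp only [List.cons_append, List.nil_append] at h3 h4
      have hw₂len : w₂.length + 1 = ρ.length := by
        have := h3.length; have := h4.length; simp at *; omega
      obtain ⟨w₄, h5, h6⟩ := IH w₂ w₃ i k (by omega) h4
      rw [comp_near (by omega : k = i + 1 ∨ i = k + 1)] at h5
      rw [comp_near (by omega : i = k + 1 ∨ k = i + 1)] at h6
      simp only [List.cons_append, List.nil_append] at h5 h6
      refine ⟨k :: i :: j :: w₄, ?_, ?_⟩
      · -- k::i::ρ ~ k::i::j::w₃ ~ k::i::j::i::k::w₄ ~ ... ~ j::i::k::i::j::w₄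
        have c1 : Eqv (k :: i :: ρ) (k :: i :: j :: i :: k :: w₄) :=
          Eqv.cons k (Eqv.cons i (h3.trans (Eqv.cons j h6)))
        have c2 : Eqv (k :: i :: j :: i :: k :: w₄) (k :: j :: i :: j :: k :: w₄) :=
          Eqv.cons k (eqv_braid (by omega) (k :: w₄))
        have c3 : Eqv (k :: j :: i :: j :: k :: w₄) (j :: k :: i :: j :: k :: w₄) :=
          eqv_swap (by omega) (i :: j :: k :: w₄)
        have c4 : Eqv (j :: k :: i :: j :: k :: w₄) (j :: k :: i :: k :: j :: w₄) :=
          Eqv.cons j (Eqv.cons k (Eqv.cons i (eqv_swap (by omega) w₄)))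
        have c5 : Eqv (j :: k :: i :: k :: j :: w₄) (j :: i :: k :: i :: j :: w₄) :=
          Eqv.cons j (eqv_braid (by omega) (j :: w₄))
        exact c1.trans (c2.trans (c3.trans (c4.trans c5)))
      · -- k::w₁ ~ k::i::j::w₂ ~ k::i::j::k::i::w₄ ~ ... ~ i::j::k::i::j::w₄
        have c1 : Eqv (k :: w₁) (k :: i :: j :: k :: i :: w₄) :=
          Eqv.cons k (h2.trans (Eqv.cons i (Eqv.cons j h5)))
        have c2 : Eqv (k :: i :: j :: k :: i :: w₄) (k :: i :: k :: j :: i :: w₄) :=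
          Eqv.cons k (Eqv.cons i (eqv_swap (by omega) (i :: w₄)))
        have c3 : Eqv (k :: i :: k :: j :: i :: w₄) (i :: k :: i :: j :: i :: w₄) :=
          eqv_braid (by omega) (j :: i :: w₄)
        have c4 : Eqv (i :: k :: i :: j :: i :: w₄) (i :: k :: j :: i :: j :: w₄) :=
          Eqv.cons i (Eqv.cons k (eqv_braid (by omega) w₄))
        have c5 : Eqv (i :: k :: j :: i :: j :: w₄) (i :: j :: k :: i :: j :: w₄) :=
          Eqv.cons i (eqv_swap (by omega) (i :: j :: w₄))
        exact c1.trans (c2.trans (c3.trans (c4.trans c5)))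
  · -- near k j
    rcases letter_cases j i with hji | hji | hji
    · -- j = i
      subst hji
      rw [comp_near hkj] at E
      simp only [List.cons_append, List.nil_append] at E
      have h1 : Eqv (k :: ρ) (k :: w₁) := cancel_of_IH IH (by simpa using hlen) E
      have h2 : Eqv ρ w₁ := cancel_of_IH IH (by omega) h1
      rw [comp_self]
      rw [comp_near (by omega : k = j + 1 ∨ j = k + 1)]
      simp only [List.cons_append, List.nil_append]
      exact ⟨k :: j :: ρ, Eqv.refl _, Eqv.cons k (Eqv.cons j h2.symm)⟩
    · -- far j i, near j k
      rw [comp_near hkj] at E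
      simp only [List.cons_append, List.nil_append] at E
      obtain ⟨w₂, h1, h2⟩ := IH (k :: ρ) (k :: w₁) i j (by simpa using hlen) E
      rw [comp_far (by omega : i + 2 ≤ j ∨ j + 2 ≤ i)] at h1 ⊢
      rw [comp_far (by omega : j + 2 ≤ i ∨ i + 2 ≤ j)] at h2 ⊢
      rw [comp_near (by omega : k = j + 1 ∨ j = k + 1)]
      simp only [List.cons_append, List.nil_append] at h1 h2 ⊢
      obtain ⟨w₃, h3, h4⟩ := IH ρ w₂ k j (by omega) h1
      rw [comp_near (by omega : j = k + 1 ∨ k = j + 1)] at h3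
      rw [comp_near (by omega : k = j + 1 ∨ j = k + 1)] at h4
      simp only [List.cons_append, List.nil_append] at h3 h4
      have hw₁len : w₁.length + 1 = ρ.length + 1 := by
        have := E.length; simp at this; omega
      obtain ⟨w₄, h5, h6⟩ := IH w₁ w₂ k i (by omega) h2
      rw [comp_near (by omega : i = k + 1 ∨ k = i + 1)] at h5
      rw [comp_near (by omega : k = i + 1 ∨ i = k + 1)] at h6
      simp only [List.cons_append, List.nil_append] at h5 h6
      -- h4 : w₂ ~ k::j::w₃ ; h6 : w₂ ~ k::i::w₄ ⇒ j::w₃ ~ i::w₄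
      have hw₃len : w₃.length + 1 < L := by
        have := h3.length; simp at this; omega
      have h7 : Eqv (j :: w₃) (i :: w₄) :=
        cancel_of_IH IH (by simpa using hw₃len) (h4.symm.trans h6)
      obtain ⟨w₅, h8, h9⟩ := IH w₃ w₄ j i (by omega) h7
      rw [comp_far (by omega : j + 2 ≤ i ∨ i + 2 ≤ j)] at h8
      rw [comp_far (by omega : i + 2 ≤ j ∨ j + 2 ≤ i)] at h9
      simp only [List.cons_append, List.nil_append] at h8 h9
      refine ⟨k :: j :: i :: k :: w₅, ?_, ?_⟩
      · -- k::i::ρ ~ k::i::j::k::w₃ ~ k::i::j::k::i::w₅ ~ ... ~ j::k::j::i::k::w₅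
        have c1 : Eqv (k :: i :: ρ) (k :: i :: j :: k :: i :: w₅) :=
          Eqv.cons k (Eqv.cons i (h3.trans (Eqv.cons j (Eqv.cons k h8))))
        have c2 : Eqv (k :: i :: j :: k :: i :: w₅) (k :: j :: i :: k :: i :: w₅) :=
          Eqv.cons k (eqv_swap (by omega) (k :: i :: w₅))
        have c3 : Eqv (k :: j :: i :: k :: i :: w₅) (k :: j :: k :: i :: k :: w₅) :=
          Eqv.cons k (Eqv.cons j (eqv_braid (by omega) w₅))
        have c4 : Eqv (k :: j :: k :: i :: k :: w₅) (j :: k :: j :: i :: k :: w₅) :=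
          eqv_braid (by omega) (i :: k :: w₅)
        exact c1.trans (c2.trans (c3.trans c4))
      · -- k::j::w₁ ~ k::j::i::k::w₄ ~ k::j::i::k::j::w₅ ~ ... ~ i::k::j::i::k::w₅
        have c1 : Eqv (k :: j :: w₁) (k :: j :: i :: k :: j :: w₅) :=
          Eqv.cons k (Eqv.cons j (h5.trans (Eqv.cons i (Eqv.cons k h9))))
        have c2 : Eqv (k :: j :: i :: k :: j :: w₅) (k :: i :: j :: k :: j :: w₅) :=
          Eqv.cons k (eqv_swap (by omega) (k :: j :: w₅))
        have c3 : Eqv (k :: i :: j :: k :: j :: w₅) (k :: i :: k :: j :: k :: w₅) :=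
          Eqv.cons k (Eqv.cons i (eqv_braid (by omega) w₅))
        have c4 : Eqv (k :: i :: k :: j :: k :: w₅) (i :: k :: i :: j :: k :: w₅) :=
          eqv_braid (by omega) (j :: k :: w₅)
        have c5 : Eqv (i :: k :: i :: j :: k :: w₅) (i :: k :: j :: i :: k :: w₅) :=
          Eqv.cons i (Eqv.cons k (eqv_swap (by omega) (k :: w₅)))
        exact c1.trans (c2.trans (c3.trans (c4.trans c5)))
    · -- near j i and near j k: impossible since |i-k| = 1
      omega

/-- The key lemma (Garside): if `σ_i u ≡ σ_j v` then the lcm of `σ_i, σ_j` divides both. -/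
theorem key : ∀ L, KeyIH L := by
  intro L
  induction L using Nat.strong_induction_on with
  | _ L SIH =>
  intro u v i j hlen h
  suffices H : ∀ x, Eqv x (j :: v) → ∀ i' u', x = i' :: u' → u'.length < L →
      ∃ w, Eqv u' (comp i' j ++ w) ∧ Eqv v (comp j i' ++ w) from H _ h i u rfl hlen
  intro x hx
  induction hx using Relation.ReflTransGen.head_induction_on with
  | refl =>
    intro i' u' hx _
    rcases List.cons_eq_cons.mp hx with ⟨rfl, rfl⟩
    exact ⟨v, by rw [comp_self]; exact Eqv.refl _, by rw [comp_self]; exact Eqv.refl _⟩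
  | head hstep hchain ih =>
    intro i' u' hx hle
    subst hx
    rename_i c
    have hclen : c.length = u'.length + 1 := by
      have := hstep.length; simp at this; omega
    match c, hclen with
    | k :: u₁, hclen =>
    obtain ⟨w₁, hw1, hw2⟩ := ih k u₁ rfl (by simp at hclen; omega)
    have IH' : KeyIH u'.length := SIH u'.length hle
    obtain ⟨p, a, b, q, hr, h1, h2⟩ := hstep
    cases p with
    | cons a' p' =>
      -- step inside the tail
      simp only [List.cons_append] at h1 h2
      injection h1 with hia' h1
      injection h2 with hka' h2
      have hki : k = i' := by rw [hka', hia']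
      subst hki
      have hstep' : Step u' u₁ := ⟨p', a, b, q, hr, h1, h2⟩
      exact ⟨w₁, hstep'.eqv.trans hw1, hw2⟩
    | nil =>
      simp only [List.nil_append] at h1 h2
      have hcases : (∃ x y, (x + 2 ≤ y ∨ y + 2 ≤ x) ∧ i' = x ∧ k = y ∧
            u' = y :: q ∧ u₁ = x :: q) ∨
          ((k = i' + 1 ∨ i' = k + 1) ∧ u' = k :: i' :: q ∧ u₁ = i' :: k :: q) := by
        rcases hr with hab | hba
        · cases hab with
          | far x y hxy =>
            simp only [List.cons_append, List.nil_append] at h1 h2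
            injection h1 with e1 h1; injection h2 with e2 h2
            exact Or.inl ⟨x, y, Or.inl hxy, e1, e2, h1, h2⟩
          | near x =>
            simp only [List.cons_append, List.nil_append] at h1 h2
            injection h1 with e1 h1; injection h2 with e2 h2
            refine Or.inr ⟨by omega, ?_, ?_⟩
            · rw [e1, e2]; exact h1
            · rw [e1, e2]; exact h2
        · cases hba with
          | far x y hxy =>
            simp only [List.cons_append, List.nil_append] at h1 h2
            injection h1 with e1 h1; injection h2 with e2 h2
            exact Or.inl ⟨y, x, Or.inr hxy, e1, e2, h1, h2⟩
          | near x =>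
            simp only [List.cons_append, List.nil_append] at h1 h2
            injection h1 with e1 h1; injection h2 with e2 h2
            refine Or.inr ⟨by omega, ?_, ?_⟩
            · rw [e1, e2]; exact h1
            · rw [e1, e2]; exact h2
      rcases hcases with ⟨x, y, hxy, hi, hk, hu', hu₁⟩ | ⟨hnear, hu', hu₁⟩
      · subst hi; subst hk; subst hu'
        rw [hu₁] at hw1
        obtain ⟨w, g1, g2⟩ := CLfar IH' i' k j hxy q w₁
          (by simp only [List.length_cons]; omega) hw1
        exact ⟨w, g1, hw2.trans g2⟩
      · subst hu'
        rw [hu₁] at hw1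
        obtain ⟨w, g1, g2⟩ := CLnear IH' i' k j hnear q w₁
          (by simp only [List.length_cons]; omega) hw1
        exact ⟨w, g1, hw2.trans g2⟩

/-- The head-letter version of the key lemma. -/
theorem key_lemma {u v : W} {i j : ℕ} (h : Eqv (i :: u) (j :: v)) :
    ∃ w, Eqv u (comp i j ++ w) ∧ Eqv v (comp j i ++ w) :=
  key (u.length + 1) u v i j (by omega) h

/-- Left cancellation of a letter. -/
theorem cancel_cons {a : ℕ} {x y : W} (h : Eqv (a :: x) (a :: y)) : Eqv x y :=
  cancel_of_IH (key (x.length + 1)) (by omega) h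

/-- Left cancellation. -/
theorem cancel_prefix (p : W) {x y : W} (h : Eqv (p ++ x) (p ++ y)) : Eqv x y := by
  induction p with
  | nil => simpa using h
  | cons a p ih => exact ih (cancel_cons (by simpa using h))

/-! ### Reversal, right cancellation -/

theorem Step.rev {u v : W} (h : Step u v) : Step u.reverse v.reverse := by
  obtain ⟨p, a, b, q, hr, h1, h2⟩ := h
  refine ⟨q.reverse, a.reverse, b.reverse, p.reverse, ?_, by simp [h1], by simp [h2]⟩
  rcases hr with h | h
  · cases h with
    | far i j hij => exact Or.inr (by simpa using Brel.far i j hij)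
    | near i => exact Or.inl (by simpa using Brel.near i)
  · cases h with
    | far i j hij => exact Or.inl (by simpa using Brel.far i j hij)
    | near i => exact Or.inr (by simpa using Brel.near i)

theorem Eqv.rev {u v : W} (h : Eqv u v) : Eqv u.reverse v.reverse := by
  induction h with
  | refl => exact Eqv.refl _
  | tail _ hs ih => exact ih.trans hs.rev.eqv

theorem cancel_suffix (s : W) {x y : W} (h : Eqv (x ++ s) (y ++ s)) : Eqv x y := by
  have := (cancel_prefix s.reverse (by simpa using h.rev)).rev
  simpa using this

/-! ### Divisibility and conditional lcms -/

/-- Left divisibility of words modulo braid equivalence. -/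
def Dvd (u z : W) : Prop := ∃ s, Eqv z (u ++ s)

theorem Dvd.nil (z : W) : Dvd [] z := ⟨z, Eqv.refl z⟩

theorem Dvd.self (z : W) : Dvd z z := ⟨[], by simpa using Eqv.refl z⟩

theorem Dvd.of_eqv {u z z' : W} (h : Dvd u z) (h' : Eqv z z') : Dvd u z' :=
  ⟨h.choose, h'.symm.trans h.choose_spec⟩

theorem Dvd.append_right {u z : W} (h : Dvd u z) (y : W) : Dvd u (z ++ y) := by
  obtain ⟨s, hs⟩ := h
  exact ⟨s ++ y, by simpa [List.append_assoc] using hs.append_right y⟩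

def LcmProp (u v w : W) : Prop :=
  Dvd u w ∧ Dvd v w ∧ ∀ z', Dvd u z' → Dvd v z' → Dvd w z'

theorem lcm_letter (N : ℕ)
    (IH : ∀ M, M < N → ∀ (z u v : W), z.length ≤ M → Dvd u z → Dvd v z →
      ∃ w, LcmProp u v w)
    (z : W) (i : ℕ) (v : W) (hz : z.length ≤ N) (h1 : Dvd [i] z) (h2 : Dvd v z) :
    ∃ e, LcmProp [i] v e := by
  match v with
  | [] =>
    exact ⟨[i], Dvd.self _, Dvd.nil _, fun z' hz' _ => hz'⟩
  | j :: v' =>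
    obtain ⟨α, hα⟩ := h1
    obtain ⟨t, ht⟩ := h2
    have E : Eqv (i :: α) (j :: (v' ++ t)) := by
      have := hα.symm.trans ht
      simpa using this
    obtain ⟨w₀, k1, k2⟩ := key_lemma E
    have hzlen : (v' ++ t).length + 1 = z.length := by
      have := ht.length; simp at this ⊢; omega
    rcases letter_cases j i with hji | hji | hji
    · -- i = j
      subst hji
      refine ⟨j :: v', ⟨v', Eqv.refl _⟩, Dvd.self _, fun z' _ h2' => h2'⟩
    · -- far
      rw [comp_far (by omega : j + 2 ≤ i ∨ i + 2 ≤ j)] at k2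
      simp only [List.cons_append, List.nil_append] at k2
      obtain ⟨e', he1, he2, hemin⟩ := IH (N - 1) (by omega) (v' ++ t) [i] v'
        (by omega) ⟨w₀, by simpa using k2⟩ ⟨t, Eqv.refl _⟩
      obtain ⟨t', ht'⟩ := he1
      simp only [List.cons_append, List.nil_append] at ht'
      refine ⟨j :: e', ⟨j :: t', ?_⟩, ?_, ?_⟩
      · simp only [List.cons_append, List.nil_append]
        exact (Eqv.cons j ht').trans (eqv_swap (by omega) t')
      · obtain ⟨s', hs'⟩ := he2
        exact ⟨s', by simpa using Eqv.cons j hs'⟩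
      · rintro z' ⟨γ, hγ⟩ ⟨t'', ht''⟩
        have E' : Eqv (i :: γ) (j :: (v' ++ t'')) := by
          have := hγ.symm.trans ht''; simpa using this
        obtain ⟨w₁, m1, m2⟩ := key_lemma E'
        rw [comp_far (by omega : j + 2 ≤ i ∨ i + 2 ≤ j)] at m2
        obtain ⟨r, hr⟩ := hemin (v' ++ t'') ⟨w₁, by simpa using m2⟩ ⟨t'', Eqv.refl _⟩
        exact ⟨r, by simpa using ht''.trans (Eqv.cons j hr)⟩
    · -- near
      rw [comp_near (by omega : i = j + 1 ∨ j = i + 1)] at k2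
      simp only [List.cons_append, List.nil_append] at k2
      obtain ⟨c, hc1, hc2, hcmin⟩ := IH (N - 1) (by omega) (v' ++ t) [i, j] v'
        (by omega) ⟨w₀, by simpa using k2⟩ ⟨t, Eqv.refl _⟩
      obtain ⟨y, hy⟩ := hc1
      simp only [List.cons_append, List.nil_append] at hy
      refine ⟨j :: c, ⟨j :: i :: y, ?_⟩, ?_, ?_⟩
      · simp only [List.cons_append, List.nil_append]
        exact (Eqv.cons j hy).trans (eqv_braid (by omega) y)
      · obtain ⟨s', hs'⟩ := hc2
        exact ⟨s', by simpa using Eqv.cons j hs'⟩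
      · rintro z' ⟨γ, hγ⟩ ⟨t'', ht''⟩
        have E' : Eqv (i :: γ) (j :: (v' ++ t'')) := by
          have := hγ.symm.trans ht''; simpa using this
        obtain ⟨w₁, m1, m2⟩ := key_lemma E'
        rw [comp_near (by omega : i = j + 1 ∨ j = i + 1)] at m2
        obtain ⟨r, hr⟩ := hcmin (v' ++ t'') ⟨w₁, by simpa using m2⟩ ⟨t'', Eqv.refl _⟩
        exact ⟨r, by simpa using ht''.trans (Eqv.cons j hr)⟩

theorem lcm_exists : ∀ N (z u v : W), z.length ≤ N → Dvd u z → Dvd v z →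
    ∃ w, LcmProp u v w := by
  intro N
  induction N using Nat.strong_induction_on with
  | _ N IH =>
  intro z u v hz h1 h2
  match u with
  | [] => exact ⟨v, Dvd.nil _, Dvd.self _, fun z' _ h2' => h2'⟩
  | i :: u' =>
    obtain ⟨s, hs⟩ := h1
    have h1i : Dvd [i] z := ⟨u' ++ s, by simpa using hs⟩
    obtain ⟨l, hl1, hl2, hlmin⟩ := lcm_letter N IH z i v hz h1i h2
    obtain ⟨h, hlh⟩ := hl1
    simp only [List.cons_append, List.nil_append] at hlh
    obtain ⟨s₂, hs₂⟩ := hlmin z h1i h2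
    have hα : Eqv (u' ++ s) (h ++ s₂) := by
      apply cancel_cons (a := i)
      have h' : Eqv z (i :: (h ++ s₂)) := hs₂.trans (by simpa using hlh.append_right s₂)
      exact (by simpa using hs.symm.trans h' : Eqv (i :: (u' ++ s)) (i :: (h ++ s₂)))
    have hαlen : (u' ++ s).length + 1 = z.length := by
      have := hs.length; simp at this ⊢; omega
    obtain ⟨c, hc1, hc2, hcmin⟩ := IH (N - 1) (by omega) (u' ++ s) u' h
      (by omega) ⟨s, Eqv.refl _⟩ ⟨s₂, hα⟩
    refine ⟨i :: c, ?_, ?_, ?_⟩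
    · obtain ⟨x, hx⟩ := hc1
      exact ⟨x, by simpa using Eqv.cons i hx⟩
    · obtain ⟨y, hy⟩ := hc2
      obtain ⟨x₂, hx₂⟩ := hl2
      refine ⟨x₂ ++ y, ?_⟩
      have e1 : Eqv (i :: c) (i :: (h ++ y)) := Eqv.cons i hy
      have e2 : Eqv (i :: (h ++ y)) (l ++ y) := by
        simpa using (hlh.symm.append_right y)
      have e3 : Eqv (l ++ y) ((v ++ x₂) ++ y) := hx₂.append_right y
      simpa [List.append_assoc] using e1.trans (e2.trans e3)
    · rintro z' ⟨s', hs'⟩ hv'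
      have h1i' : Dvd [i] z' := ⟨u' ++ s', by simpa using hs'⟩
      obtain ⟨s₃, hs₃⟩ := hlmin z' h1i' hv'
      have hγ : Eqv (u' ++ s') (h ++ s₃) := by
        apply cancel_cons (a := i)
        have : Eqv z' (i :: (h ++ s₃)) := hs₃.trans (by simpa using hlh.append_right s₃)
        exact (by simpa using hs'.symm.trans this)
      obtain ⟨r, hr⟩ := hcmin (u' ++ s') ⟨s', Eqv.refl _⟩ ⟨s₃, hγ⟩
      exact ⟨r, by simpa using hs'.trans (Eqv.cons i hr)⟩

/-! ### The Garside element Δ and common multiples -/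

/-- Commute a letter past a word of letters all far from it. -/
theorem far_past {k : ℕ} : ∀ (s : W), (∀ x ∈ s, x + 2 ≤ k ∨ k + 2 ≤ x) →
    Eqv (k :: s) (s ++ [k])
  | [], _ => Eqv.refl _
  | a :: s, h => by
    have h1 : Eqv (k :: a :: s) (a :: k :: s) :=
      eqv_swap (by rcases h a (by simp) with h' | h' <;> omega) s
    exact h1.trans (by simpa using Eqv.cons a (far_past s (fun x hx => h x (by simp [hx]))))

/-- The shift rule: `(σ_1 ⋯ σ_m) σ_{i+1} ≡ σ_{i+2} (σ_1 ⋯ σ_m)`. -/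
theorem shift_rule {i m : ℕ} (h : i + 1 < m) :
    Eqv (List.range m ++ [i]) ((i + 1) :: List.range m) := by
  have hm : m = (i + 2) + (m - i - 2) := by omega
  set s : W := (List.range (m - i - 2)).map (fun x => (i + 2) + x) with hs
  have hrange : List.range m = List.range (i + 2) ++ s := by
    rw [hm, List.range_add]
  have hsfar : ∀ x ∈ s, x + 2 ≤ i ∨ i + 2 ≤ x := by
    intro x hx
    simp only [hs, List.mem_map] at hx
    obtain ⟨y, _, rfl⟩ := hx
    omega
  have hr2 : List.range (i + 2) = List.range i ++ [i, i + 1] := by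
    rw [List.range_add]
    norm_num [List.range_succ]
  have e1 : Eqv (List.range m ++ [i]) (List.range (i + 2) ++ ([i] ++ s)) := by
    rw [hrange]
    simp only [List.append_assoc]
    apply Eqv.append_left
    exact (far_past s hsfar).symm
  have e2 : Eqv (List.range (i + 2) ++ ([i] ++ s))
      (List.range i ++ ([i + 1, i, i + 1] ++ s)) := by
    rw [hr2]
    simp only [List.append_assoc, List.cons_append, List.nil_append]
    apply Eqv.append_left
    exact eqv_braid (by omega) s
  have e3 : Eqv (List.range i ++ ([i + 1, i, i + 1] ++ s))
      ((i + 1) :: (List.range i ++ ([i, i + 1] ++ s))) := by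
    have c : Eqv ((i + 1) :: List.range i) (List.range i ++ [i + 1]) :=
      far_past (List.range i) (fun x hx => by simp at hx; omega)
    have := c.symm.append_right ([i, i + 1] ++ s)
    simpa [List.append_assoc] using this
  have e4 : (List.range i ++ ([i, i + 1] ++ s)) = List.range m := by
    rw [hrange, hr2]; simp
  rw [e4] at e3
  exact e1.trans (e2.trans e3)

/-- The reversed shift rule. -/
theorem shift_rule_rev {i m : ℕ} (h : i + 1 < m) :
    Eqv ((List.range m).reverse ++ [i + 1]) (i :: (List.range m).reverse) := by
  have := (shift_rule h).rev
  simpa using this.symm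

/-- The Garside element `Δ_m` as a word. -/
def Delta : ℕ → W
  | 0 => []
  | m + 1 => List.range (m + 1) ++ Delta m

theorem mem_Delta : ∀ {m x : ℕ}, x ∈ Delta m → x < m
  | 0, x, h => by simp [Delta] at h
  | m + 1, x, h => by
    simp only [Delta, List.mem_append, List.mem_range] at h
    rcases h with h | h
    · exact h
    · exact (mem_Delta h).trans (by omega)

/-- `Δ_{m+1} ≡ Δ_m · desc(m+1)`. -/
theorem delta_comm : ∀ m : ℕ,
    Eqv (List.range (m + 1) ++ Delta m) (Delta m ++ (List.range (m + 1)).reverse)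
  | 0 => by simp [Delta]; exact Eqv.refl _
  | m + 1 => by
    have T : Eqv ((m + 1) :: Delta (m + 1))
        (Delta m ++ ([m + 1] ++ (List.range (m + 1)).reverse)) := by
      have t1 : Eqv ((m + 1) :: Delta (m + 1))
          ((m + 1) :: (Delta m ++ (List.range (m + 1)).reverse)) :=
        Eqv.cons (m + 1) (delta_comm m)
      have t2 : Eqv ((m + 1) :: Delta m) (Delta m ++ [m + 1]) :=
        far_past (Delta m) (fun x hx => by have := mem_Delta hx; omega)
      have t3 := t2.append_right (List.range (m + 1)).reverse
      refine t1.trans ?_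
      simpa [List.append_assoc] using t3
    have main : Eqv (List.range (m + 1) ++ ((m + 1) :: Delta (m + 1)))
        (List.range (m + 1) ++ (Delta m ++ ([m + 1] ++ (List.range (m + 1)).reverse))) :=
      Eqv.append_left _ T
    have lhs : List.range (m + 2) ++ Delta (m + 1)
        = List.range (m + 1) ++ ((m + 1) :: Delta (m + 1)) := by
      rw [List.range_succ]; simp
    have rhs : Delta (m + 1) ++ (List.range (m + 2)).reverse
        = List.range (m + 1) ++ (Delta m ++ ([m + 1] ++ (List.range (m + 1)).reverse)) := by
      rw [List.range_succ (n := m + 1)]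
      simp [Delta, List.append_assoc]
    rw [lhs, rhs]
    exact main

/-- `Δ_m σ_{i+1} ≡ σ_{m-i} Δ_m`. -/
theorem delta_perm : ∀ m : ℕ, ∀ i : ℕ, i < m →
    Eqv (Delta m ++ [i]) ((m - 1 - i) :: Delta m)
  | 0, i, h => by omega
  | m + 1, i, h => by
    rcases Nat.lt_or_ge i m with hi | hi
    · -- i < m
      have e1 : Eqv (Delta (m + 1) ++ [i])
          (List.range (m + 1) ++ ((m - 1 - i) :: Delta m)) := by
        have := (delta_perm m i hi).append_left (List.range (m + 1))
        simpa [Delta, List.append_assoc] using this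
      have e2 : Eqv (List.range (m + 1) ++ [m - 1 - i]) ((m - 1 - i + 1) :: List.range (m + 1)) :=
        shift_rule (by omega)
      have e3 := e2.append_right (Delta m)
      have : Eqv (Delta (m + 1) ++ [i]) ((m - 1 - i + 1) :: (List.range (m + 1) ++ Delta m)) := by
        refine e1.trans ?_
        simpa [List.append_assoc] using e3
      have hind : m - 1 - i + 1 = m + 1 - 1 - i := by omega
      rw [hind] at this
      exact this
    · -- i = m
      have him : i = m := by omega
      rw [him]
      match m with
      | 0 => simpa [Delta, List.range_succ] using Eqv.refl ([0, 0] : W)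
      | m + 1 =>
        have e1 : Eqv (Delta (m + 2) ++ [m + 1])
            (Delta (m + 1) ++ ((List.range (m + 2)).reverse ++ [m + 1])) := by
          have := (delta_comm (m + 1)).append_right [m + 1]
          simpa [Delta, List.append_assoc] using this
        have e2 : Eqv ((List.range (m + 2)).reverse ++ [m + 1])
            (m :: (List.range (m + 2)).reverse) := shift_rule_rev (by omega)
        have e3 : Eqv (Delta (m + 2) ++ [m + 1])
            ((Delta (m + 1) ++ [m]) ++ (List.range (m + 2)).reverse) := by
          refine e1.trans ?_
          have := e2.append_left (Delta (m + 1))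
          simpa [List.append_assoc] using this
        have e4 : Eqv (Delta (m + 1) ++ [m]) (0 :: Delta (m + 1)) := by
          have := delta_perm (m + 1) m (by omega)
          simpa using this
        have e5 := e4.append_right (List.range (m + 2)).reverse
        have e6 : Eqv (0 :: (Delta (m + 1) ++ (List.range (m + 2)).reverse))
            (0 :: Delta (m + 2)) :=
          Eqv.cons 0 (delta_comm (m + 1)).symm
        have final : Eqv (Delta (m + 2) ++ [m + 1]) (0 :: Delta (m + 2)) :=
          e3.trans (e5.trans e6)
        have h0 : m + 1 + 1 - 1 - (m + 1) = 0 := by omega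
        rw [h0]
        exact final

/-- Every in-range letter left-divides `Δ_m`. -/
theorem letter_dvd_delta : ∀ m i : ℕ, i < m → Dvd [i] (Delta m)
  | 0, i, h => by omega
  | m + 1, 0, _ => by
    refine ⟨(List.range m).map Nat.succ ++ Delta m, ?_⟩
    rw [show Delta (m + 1) = List.range (m + 1) ++ Delta m from rfl,
      List.range_succ_eq_map]
    simpa using Eqv.refl _
  | m + 1, i + 1, h => by
    obtain ⟨t, ht⟩ := letter_dvd_delta m i (by omega)
    refine ⟨List.range (m + 1) ++ t, ?_⟩
    have e1 : Eqv (Delta (m + 1)) (List.range (m + 1) ++ ([i] ++ t)) := by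
      have := ht.append_left (List.range (m + 1))
      simpa [Delta] using this
    have e2 : Eqv ((List.range (m + 1) ++ [i]) ++ t) (((i + 1) :: List.range (m + 1)) ++ t) :=
      (shift_rule h).append_right t
    refine e1.trans ?_
    simpa [List.append_assoc] using e2

/-- Push a word through `Δ_m` (Δ is quasi-central). -/
theorem push_delta {m : ℕ} : ∀ s : W, (∀ x ∈ s, x < m) →
    ∃ s', Eqv (s ++ Delta m) (Delta m ++ s') ∧ ∀ x ∈ s', x < m
  | [], _ => ⟨[], by simpa using Eqv.refl _, by simp⟩
  | a :: s, h => by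
    obtain ⟨s', hs', hs'mem⟩ := push_delta s (fun x hx => h x (by simp [hx]))
    have ha : a < m := h a (by simp)
    have e1 : Eqv (a :: (s ++ Delta m)) (a :: (Delta m ++ s')) := Eqv.cons a hs'
    have e2 : Eqv (Delta m ++ [a]) ((m - 1 - a) :: Delta m) := delta_perm m a ha
    have e2' : Eqv (a :: Delta m) (Delta m ++ [m - 1 - a]) := by
      have hsub : m - 1 - (m - 1 - a) = a := by omega
      have := (delta_perm m (m - 1 - a) (by omega)).symm
      rwa [hsub] at this
    have e3 := e2'.append_right s'
    refine ⟨(m - 1 - a) :: s', ?_, ?_⟩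
    · refine e1.trans ?_
      simpa [List.append_assoc] using e3
    · intro x hx
      simp only [List.mem_cons] at hx
      rcases hx with rfl | hx
      · omega
      · exact hs'mem x hx

/-- Powers of Δ. -/
def Dpow (m : ℕ) : ℕ → W
  | 0 => []
  | k + 1 => Dpow m k ++ Delta m

theorem mem_Dpow {m : ℕ} : ∀ {k x : ℕ}, x ∈ Dpow m k → x < m
  | 0, x, h => by simp [Dpow] at h
  | k + 1, x, h => by
    simp only [Dpow, List.mem_append] at h
    rcases h with h | h
    · exact mem_Dpow h
    · exact mem_Delta h

theorem dvd_dpow_succ {m k : ℕ} {u : W} (h : Dvd u (Dpow m k)) : Dvd u (Dpow m (k + 1)) :=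
  h.append_right (Delta m)

theorem dvd_dpow_mono {m : ℕ} {u : W} {k l : ℕ} (hk : Dvd u (Dpow m k)) (hkl : k ≤ l) :
    Dvd u (Dpow m l) := by
  induction l with
  | zero => simpa [show k = 0 by omega] using hk
  | succ l ih =>
    rcases Nat.lt_or_ge k (l + 1) with h | h
    · exact dvd_dpow_succ (ih (by omega))
    · simpa [show k = l + 1 by omega] using hk

/-- Every word over the alphabet `{0, …, m-1}` divides a power of `Δ_m`. -/
theorem dvd_dpow (m : ℕ) (u : W) (hu : ∀ x ∈ u, x < m) : ∃ k, Dvd u (Dpow m k) := by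
  induction u using List.reverseRecOn with
  | nil => exact ⟨0, Dvd.nil _⟩
  | append_singleton u₀ a ih =>
    obtain ⟨k, s, hks⟩ := ih (fun x hx => hu x (by simp [hx]))
    have hsmem : ∀ x ∈ s, x < m := by
      intro x hx
      exact mem_Dpow ((hks.mem).mpr (by simp [hx]))
    obtain ⟨s', hpush, _⟩ := push_delta s hsmem
    obtain ⟨t, hta⟩ := letter_dvd_delta m a (hu a (by simp))
    refine ⟨k + 1, t ++ s', ?_⟩
    have e1 : Eqv (Dpow m (k + 1)) ((u₀ ++ s) ++ Delta m) := hks.append_right (Delta m)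
    have e2 : Eqv (u₀ ++ (s ++ Delta m)) (u₀ ++ (Delta m ++ s')) := hpush.append_left u₀
    have e3 : Eqv (Delta m ++ s') (([a] ++ t) ++ s') := hta.append_right s'
    have e4 := e3.append_left u₀
    refine e1.trans ?_
    simp only [List.append_assoc] at e2 e4 ⊢
    exact e2.trans (by simpa [List.append_assoc] using e4)

/-- Any two words over `{0, …, m-1}` admit a common multiple. -/
theorem common_multiple (m : ℕ) (u v : W) (hu : ∀ x ∈ u, x < m) (hv : ∀ x ∈ v, x < m) :
    ∃ z, Dvd u z ∧ Dvd v z ∧ ∀ x ∈ z, x < m := by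
  obtain ⟨k₁, h₁⟩ := dvd_dpow m u hu
  obtain ⟨k₂, h₂⟩ := dvd_dpow m v hv
  exact ⟨Dpow m (max k₁ k₂), dvd_dpow_mono h₁ (le_max_left _ _),
    dvd_dpow_mono h₂ (le_max_right _ _), fun x hx => mem_Dpow hx⟩

/-! ### The positive braid monoid as a quotient, and its Ore localization -/

/-- The braid congruence on the free monoid. -/
def bcon : Con (FreeMonoid ℕ) :=
  @conGen (FreeMonoid ℕ) _ (fun a b => Brel (FreeMonoid.toList a) (FreeMonoid.toList b))

/-- The (infinitely generated) positive braid monoid. -/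
abbrev PB : Type := bcon.Quotient

theorem bcon_of_eqv {u v : W} (h : Eqv u v) :
    bcon (FreeMonoid.ofList u) (FreeMonoid.ofList v) := by
  induction h with
  | refl => exact bcon.refl _
  | tail _ hs ih =>
    refine ih.trans ?_
    obtain ⟨p, a, b, q, hr, h1, h2⟩ := hs
    rw [h1, h2, FreeMonoid.ofList_append, FreeMonoid.ofList_append,
      FreeMonoid.ofList_append, FreeMonoid.ofList_append]
    refine bcon.mul (bcon.mul (bcon.refl _) ?_) (bcon.refl _)
    have hof : ∀ {x y : W}, Brel x y → bcon (FreeMonoid.ofList x) (FreeMonoid.ofList y) :=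
      fun h => ConGen.Rel.of _ _ h
    rcases hr with h | h
    · exact hof h
    · exact bcon.symm (hof h)

theorem eqv_of_bcon {a b : FreeMonoid ℕ} (h : bcon a b) :
    Eqv (FreeMonoid.toList a) (FreeMonoid.toList b) := by
  induction h with
  | of x y h => exact (Step.eqv ⟨[], _, _, [], Or.inl h, by simp, by simp⟩)
  | refl => exact Eqv.refl _
  | symm _ ih => exact ih.symm
  | trans _ _ ih1 ih2 => exact ih1.trans ih2
  | mul _ _ ih1 ih2 => simpa [FreeMonoid.toList_mul] using ih1.append_congr ih2

theorem eqv_iff_bcon {u v : W} :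
    Eqv u v ↔ bcon (FreeMonoid.ofList u) (FreeMonoid.ofList v) :=
  ⟨bcon_of_eqv, fun h => eqv_of_bcon h⟩

/-- Class of a word in the positive braid monoid. -/
def cls (u : W) : PB := (FreeMonoid.ofList u : FreeMonoid ℕ)

theorem cls_eq_iff {u v : W} : cls u = cls v ↔ Eqv u v := by
  rw [cls, cls, Con.eq, eqv_iff_bcon]

theorem cls_append (u v : W) : cls (u ++ v) = cls u * cls v := by
  rw [cls, cls, cls, FreeMonoid.ofList_append, Con.coe_mul]

theorem cls_surjective : Function.Surjective cls := by
  intro x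
  induction x using Con.induction_on with
  | H a => exact ⟨FreeMonoid.toList a, rfl⟩

theorem PB_mul_left_cancel {a b c : PB} (h : a * b = a * c) : b = c := by
  induction a using Con.induction_on with
  | H x =>
    induction b using Con.induction_on with
    | H y =>
      induction c using Con.induction_on with
      | H z =>
        rw [← Con.coe_mul, ← Con.coe_mul, Con.eq] at h
        rw [Con.eq]
        have := eqv_of_bcon h
        simp only [FreeMonoid.toList_mul] at this
        have := cancel_prefix (FreeMonoid.toList x) this
        simpa [FreeMonoid.ofList_toList] using eqv_iff_bcon.mp this

theorem PB_mul_right_cancel {a b c : PB} (h : b * a = c * a) : b = c := by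
  induction a using Con.induction_on with
  | H x =>
    induction b using Con.induction_on with
    | H y =>
      induction c using Con.induction_on with
      | H z =>
        rw [← Con.coe_mul, ← Con.coe_mul, Con.eq] at h
        rw [Con.eq]
        have := eqv_of_bcon h
        simp only [FreeMonoid.toList_mul] at this
        have := cancel_suffix (FreeMonoid.toList x) this
        simpa [FreeMonoid.ofList_toList] using eqv_iff_bcon.mp this

theorem mem_lt_bound (u : W) : ∀ x ∈ u, x < u.foldr max 0 + 1 := by
  induction u with
  | nil => simp
  | cons a u ih =>
    intro x hx
    simp only [List.mem_cons] at hx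
    simp only [List.foldr_cons]
    rcases hx with rfl | hx
    · have := le_max_left x (u.foldr max 0); omega
    · have := ih x hx
      have := le_max_right a (u.foldr max 0); omega

/-- Any two words have a common right multiple. -/
theorem common_right_multiple (u v : W) : ∃ z, Dvd u z ∧ Dvd v z := by
  set m := (u ++ v).foldr max 0 + 1
  have hu : ∀ x ∈ u, x < m := fun x hx => mem_lt_bound (u ++ v) x (by simp [hx])
  have hv : ∀ x ∈ v, x < m := fun x hx => mem_lt_bound (u ++ v) x (by simp [hx])
  obtain ⟨z, h1, h2, _⟩ := common_multiple m u v hu hv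
  exact ⟨z, h1, h2⟩

/-- The left Ore condition: common left multiples. -/
theorem PB_ore (r s : PB) : ∃ (n' d : PB), d * r = n' * s := by
  obtain ⟨x, rfl⟩ := cls_surjective r
  obtain ⟨y, rfl⟩ := cls_surjective s
  obtain ⟨z, ⟨a, ha⟩, ⟨b, hb⟩⟩ := common_right_multiple x.reverse y.reverse
  refine ⟨cls b.reverse, cls a.reverse, ?_⟩
  rw [← cls_append, ← cls_append, cls_eq_iff]
  have h1 : Eqv z.reverse (a.reverse ++ x) := by simpa using ha.rev
  have h2 : Eqv z.reverse (b.reverse ++ y) := by simpa using hb.rev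
  exact h1.symm.trans h2

noncomputable instance : OreLocalization.OreSet (⊤ : Submonoid PB) where
  ore_right_cancel r₁ r₂ s h := ⟨1, by rw [PB_mul_right_cancel h]⟩
  oreNum r s := (PB_ore r s).choose
  oreDenom r s := ⟨(PB_ore r s).choose_spec.choose, trivial⟩
  ore_eq r s := (PB_ore r s).choose_spec.choose_spec

/-- The group of fractions of the positive braid monoid. -/
abbrev GB : Type := OreLocalization (⊤ : Submonoid PB) PB

theorem numeratorHom_injective :
    Function.Injective (OreLocalization.numeratorHom : PB →* GB) := by
  intro r r' h
  rw [OreLocalization.numeratorHom_apply, OreLocalization.numeratorHom_apply,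
    OreLocalization.oreDiv_eq_iff] at h
  obtain ⟨u, v, h1, h2⟩ := h
  have huv : (u : PB) = v := by simpa using h2
  rw [Submonoid.smul_def, smul_eq_mul, smul_eq_mul, huv] at h1
  exact (PB_mul_left_cancel h1).symm

/-! ### Relating words to the braid group `B n` -/

/-- Evaluation of a 0-based word in `B n` (letter `x` is `σ_{x+1}`, i.e. `gen n (x+1)`). -/
def wordProd (n : ℕ) (u : W) : B n := (u.map (fun x => gen n (x + 1))).prod

theorem wordProd_nil (n : ℕ) : wordProd n [] = 1 := rfl

theorem wordProd_cons (n : ℕ) (x : ℕ) (u : W) :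
    wordProd n (x :: u) = gen n (x + 1) * wordProd n u := by
  simp [wordProd]

theorem wordProd_append (n : ℕ) (u v : W) :
    wordProd n (u ++ v) = wordProd n u * wordProd n v := by
  simp [wordProd]

theorem gen_eq {n x : ℕ} (hx : x < n - 1) :
    gen n (x + 1) = PresentedGroup.of (⟨x, hx⟩ : Fin (n - 1)) := by
  unfold gen
  rw [dif_pos (show x + 1 - 1 < n - 1 by omega)]
  simp

theorem rel_mk_one {n : ℕ} {r : FreeGroup (Fin (n - 1))} (hr : r ∈ braidRels (n - 1)) :
    PresentedGroup.mk (braidRels (n - 1)) r = 1 :=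
  (QuotientGroup.eq_one_iff r).mpr (Subgroup.subset_normalClosure hr)

theorem gen_far_comm {n x y : ℕ} (hxy : x + 2 ≤ y) (hy : y < n - 1) :
    gen n (x + 1) * gen n (y + 1) = gen n (y + 1) * gen n (x + 1) := by
  have hx : x < n - 1 := by omega
  have hr : (FreeGroup.of (⟨x, hx⟩ : Fin (n - 1)) * FreeGroup.of (⟨y, hy⟩ : Fin (n - 1)) *
      (FreeGroup.of (⟨x, hx⟩ : Fin (n - 1)))⁻¹ * (FreeGroup.of (⟨y, hy⟩ : Fin (n - 1)))⁻¹)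
      ∈ braidRels (n - 1) :=
    ⟨⟨x, hx⟩, ⟨y, hy⟩, Or.inl ⟨by simpa using hxy, rfl⟩⟩
  have h1 := rel_mk_one hr
  rw [map_mul, map_mul, map_mul, map_inv, map_inv] at h1
  rw [mul_inv_eq_one] at h1
  rw [mul_inv_eq_iff_eq_mul] at h1
  rw [gen_eq hx, gen_eq hy]
  exact h1

theorem gen_braid {n x : ℕ} (hx : x + 1 < n - 1) :
    gen n (x + 1) * gen n (x + 1 + 1) * gen n (x + 1) =
      gen n (x + 1 + 1) * gen n (x + 1) * gen n (x + 1 + 1) := by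
  have hx' : x < n - 1 := by omega
  have hr : (FreeGroup.of (⟨x, hx'⟩ : Fin (n - 1)) * FreeGroup.of (⟨x + 1, hx⟩ : Fin (n - 1)) *
      FreeGroup.of (⟨x, hx'⟩ : Fin (n - 1)) * (FreeGroup.of (⟨x + 1, hx⟩ : Fin (n - 1)))⁻¹ *
      (FreeGroup.of (⟨x, hx'⟩ : Fin (n - 1)))⁻¹ * (FreeGroup.of (⟨x + 1, hx⟩ : Fin (n - 1)))⁻¹)
      ∈ braidRels (n - 1) :=
    ⟨⟨x, hx'⟩, ⟨x + 1, hx⟩, Or.inr ⟨by simp, rfl⟩⟩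
  have h1 := rel_mk_one hr
  simp only [map_mul, map_inv] at h1
  rw [mul_inv_eq_one, mul_inv_eq_iff_eq_mul, mul_inv_eq_iff_eq_mul] at h1
  rw [gen_eq hx', gen_eq hx]
  simp only [mul_assoc] at h1 ⊢
  exact h1

theorem wordProd_brel {n : ℕ} {a b : W} (h : Brel a b) (ha : ∀ x ∈ a, x < n - 1) :
    wordProd n a = wordProd n b := by
  cases h with
  | far i j hij =>
    have hj : j < n - 1 := ha j (by simp)
    simp only [wordProd, List.map_cons, List.map_nil, List.prod_cons, List.prod_nil, mul_one]
    exact gen_far_comm hij hj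
  | near i =>
    have hi : i + 1 < n - 1 := ha (i + 1) (by simp)
    simp only [wordProd, List.map_cons, List.map_nil, List.prod_cons, List.prod_nil, mul_one]
    have := gen_braid (n := n) hi
    simp only [← mul_assoc] at this ⊢
    exact this

theorem wordProd_step {n : ℕ} {u v : W} (h : Step u v) (hu : ∀ x ∈ u, x < n - 1) :
    wordProd n u = wordProd n v := by
  obtain ⟨p, a, b, q, hr, h1, h2⟩ := h
  subst h1; subst h2
  rw [wordProd_append, wordProd_append, wordProd_append, wordProd_append]
  have hmid : ∀ x ∈ a, x < n - 1 := fun x hx => hu x (by simp [hx])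
  have hab : wordProd n a = wordProd n b := by
    rcases hr with h | h
    · exact wordProd_brel h hmid
    · refine (wordProd_brel h ?_).symm
      intro x hx
      exact hmid x (h.mem.mp hx)
  rw [hab]

theorem wordProd_eqv {n : ℕ} {u v : W} (h : Eqv u v) (hu : ∀ x ∈ u, x < n - 1) :
    wordProd n u = wordProd n v := by
  induction h with
  | refl => rfl
  | tail hchain hs ih =>
    refine (ih).trans (wordProd_step hs ?_)
    intro x hx
    exact hu x ((show Eqv _ _ from hchain).mem.mpr hx)

/-! ### The homomorphism `B n →* GBˣ` -/

noncomputable def genUnit (n : ℕ) (x : Fin (n - 1)) : GBˣ :=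
  (OreLocalization.numerator_isUnit (⟨cls [(x : ℕ)], trivial⟩ : (⊤ : Submonoid PB))).unit

theorem genUnit_val (n : ℕ) (x : Fin (n - 1)) :
    ((genUnit n x : GBˣ) : GB) = OreLocalization.numeratorHom (cls [(x : ℕ)]) :=
  IsUnit.unit_spec _

theorem genUnit_mul_val (n : ℕ) (x y : Fin (n - 1)) :
    ((genUnit n x * genUnit n y : GBˣ) : GB) =
      OreLocalization.numeratorHom (cls [(x : ℕ), (y : ℕ)]) := by
  rw [Units.val_mul, genUnit_val, genUnit_val, ← map_mul, ← cls_append]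
  rfl

theorem genUnit_mul3_val (n : ℕ) (x y z : Fin (n - 1)) :
    ((genUnit n x * genUnit n y * genUnit n z : GBˣ) : GB) =
      OreLocalization.numeratorHom (cls [(x : ℕ), (y : ℕ), (z : ℕ)]) := by
  rw [Units.val_mul, genUnit_mul_val, genUnit_val, ← map_mul, ← cls_append]
  rfl

theorem braid_rels_lift (n : ℕ) :
    ∀ r ∈ braidRels (n - 1), FreeGroup.lift (genUnit n) r = 1 := by
  rintro r ⟨i, j, ⟨hcond, rfl⟩ | ⟨hcond, rfl⟩⟩
  · simp only [map_mul, map_inv, FreeGroup.lift_apply_of]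
    have hc : genUnit n i * genUnit n j = genUnit n j * genUnit n i := by
      apply Units.ext
      rw [genUnit_mul_val, genUnit_mul_val]
      exact congrArg _ (cls_eq_iff.mpr (eqv_swap (Or.inl hcond) []))
    rw [hc]
    simp
  · simp only [map_mul, map_inv, FreeGroup.lift_apply_of]
    have hc : genUnit n i * genUnit n j * genUnit n i =
        genUnit n j * genUnit n i * genUnit n j := by
      apply Units.ext
      rw [genUnit_mul3_val, genUnit_mul3_val]
      exact congrArg _ (cls_eq_iff.mpr (eqv_braid (Or.inl hcond) []))
    have hgoal : genUnit n i * genUnit n j * genUnit n i * (genUnit n j)⁻¹ * (genUnit n i)⁻¹ *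
        (genUnit n j)⁻¹ = (genUnit n i * genUnit n j * genUnit n i) *
        (genUnit n j * genUnit n i * genUnit n j)⁻¹ := by group
    rw [hgoal, hc]
    group

noncomputable def psi (n : ℕ) : B n →* GBˣ := PresentedGroup.toGroup (braid_rels_lift n)

theorem psi_wordProd {n : ℕ} (u : W) (hu : ∀ x ∈ u, x < n - 1) :
    ((psi n (wordProd n u) : GBˣ) : GB) = OreLocalization.numeratorHom (cls u) := by
  induction u with
  | nil =>
    rw [wordProd_nil, map_one]
    have : cls ([] : W) = 1 := rfl
    rw [this, map_one]
    rfl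
  | cons x u ih =>
    have hx : x < n - 1 := hu x (by simp)
    rw [wordProd_cons, map_mul, Units.val_mul, ih (fun y hy => hu y (by simp [hy]))]
    rw [gen_eq hx]
    have : psi n (PresentedGroup.of (⟨x, hx⟩ : Fin (n - 1))) = genUnit n ⟨x, hx⟩ :=
      PresentedGroup.toGroup.of (braid_rels_lift n)
    rw [this, genUnit_val, ← map_mul, ← cls_append]
    rfl

/-- Injectivity: equal products in `B n` of in-range positive words force braid-equivalence. -/
theorem eqv_of_wordProd_eq {n : ℕ} {u v : W} (hu : ∀ x ∈ u, x < n - 1)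
    (hv : ∀ x ∈ v, x < n - 1) (h : wordProd n u = wordProd n v) : Eqv u v := by
  have h1 := congrArg (fun g => ((psi n g : GBˣ) : GB)) h
  rw [psi_wordProd u hu, psi_wordProd v hv] at h1
  exact cls_eq_iff.mp (numeratorHom_injective h1)

/-! ### Relating words to `Bplus` -/

theorem wordProd_mem_Bplus {n k : ℕ} (u : W) (hu : ∀ x ∈ u, x + 2 ≤ k) :
    wordProd n u ∈ Bplus n k := by
  induction u with
  | nil => exact one_mem _
  | cons x u ih =>
    rw [wordProd_cons]
    refine mul_mem (Submonoid.subset_closure ?_) (ih (fun y hy => hu y (by simp [hy])))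
    exact ⟨x + 1, by omega, by have := hu x (by simp); omega, rfl⟩

theorem exists_word_of_mem_Bplus {n k : ℕ} {β : B n} (h : β ∈ Bplus n k) :
    ∃ u : W, (∀ x ∈ u, x + 2 ≤ k) ∧ wordProd n u = β := by
  obtain ⟨l, hl, rfl⟩ := Submonoid.exists_list_of_mem_closure h
  clear h
  induction l with
  | nil => exact ⟨[], by simp, rfl⟩
  | cons y l ih =>
    obtain ⟨u, hu, hp⟩ := ih (fun z hz => hl z (by simp [hz]))
    obtain ⟨i, h1i, hik, rfl⟩ := hl y (by simp)
    refine ⟨(i - 1) :: u, ?_, ?_⟩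
    · intro x hx
      simp only [List.mem_cons] at hx
      rcases hx with rfl | hx
      · omega
      · exact hu x hx
    · rw [wordProd_cons, hp, show i - 1 + 1 = i by omega]
      simp

end Garside

/-- For `n ≥ 3`, any two elements of `B⁺_{n-1}` admit in `B⁺_n` a least
common multiple with respect to left divisibility, and it lies in `B⁺_{n-1}`. -/
theorem Bplus_pred_closed_under_left_lcm (n : ℕ) (hn : 3 ≤ n) (β γ : B n)
    (hβ : β ∈ Bplus n (n - 1)) (hγ : γ ∈ Bplus n (n - 1)) :
    ∃ δ : B n, δ ∈ Bplus n n ∧ LDiv n β δ ∧ LDiv n γ δ ∧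
      (∀ ε ∈ Bplus n n, LDiv n β ε → LDiv n γ ε → LDiv n δ ε) ∧
      δ ∈ Bplus n (n - 1) := by
  classical
  obtain ⟨u, hu, hpu⟩ := Garside.exists_word_of_mem_Bplus hβ
  obtain ⟨v, hv, hpv⟩ := Garside.exists_word_of_mem_Bplus hγ
  have hu' : ∀ x ∈ u, x < n - 2 := fun x hx => by have := hu x hx; omega
  have hv' : ∀ x ∈ v, x < n - 2 := fun x hx => by have := hv x hx; omega
  obtain ⟨z, hz1, hz2, hzmem⟩ := Garside.common_multiple (n - 2) u v hu' hv'
  obtain ⟨w, hw1, hw2, hwmin⟩ := Garside.lcm_exists z.length z u v le_rfl hz1 hz2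
  obtain ⟨r0, hr0⟩ := hwmin z hz1 hz2
  have hwmem : ∀ x ∈ w, x < n - 2 := fun x hx => hzmem x (hr0.mem.mpr (by simp [hx]))
  have hwrange : ∀ x ∈ w, x < n - 1 := fun x hx => by have := hwmem x hx; omega
  refine ⟨Garside.wordProd n w, ?_, ?_, ?_, ?_, ?_⟩
  · exact Garside.wordProd_mem_Bplus w (fun x hx => by have := hwmem x hx; omega)
  · obtain ⟨a, haw⟩ := hw1
    have hamem : ∀ x ∈ a, x < n - 2 := fun x hx =>
      hwmem x (haw.mem.mpr (by simp [hx]))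
    have hδ : Garside.wordProd n w = β * Garside.wordProd n a := by
      rw [← hpu, ← Garside.wordProd_append]
      exact Garside.wordProd_eqv haw hwrange
    rw [LDiv, hδ, inv_mul_cancel_left]
    exact Garside.wordProd_mem_Bplus a (fun x hx => by have := hamem x hx; omega)
  · obtain ⟨a, haw⟩ := hw2
    have hamem : ∀ x ∈ a, x < n - 2 := fun x hx =>
      hwmem x (haw.mem.mpr (by simp [hx]))
    have hδ : Garside.wordProd n w = γ * Garside.wordProd n a := by
      rw [← hpv, ← Garside.wordProd_append]
      exact Garside.wordProd_eqv haw hwrange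
    rw [LDiv, hδ, inv_mul_cancel_left]
    exact Garside.wordProd_mem_Bplus a (fun x hx => by have := hamem x hx; omega)
  · intro ε _ h1 h2
    obtain ⟨p, hp, hpp⟩ := Garside.exists_word_of_mem_Bplus h1
    obtain ⟨q, hq, hqq⟩ := Garside.exists_word_of_mem_Bplus h2
    have hup : ∀ x ∈ u ++ p, x < n - 1 := by
      intro x hx
      rcases List.mem_append.mp hx with hx | hx
      · have := hu x hx; omega
      · have := hp x hx; omega
    have hvq : ∀ x ∈ v ++ q, x < n - 1 := by
      intro x hx
      rcases List.mem_append.mp hx with hx | hx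
      · have := hv x hx; omega
      · have := hq x hx; omega
    have hεu : ε = Garside.wordProd n (u ++ p) := by
      rw [Garside.wordProd_append, hpu, hpp, mul_inv_cancel_left]
    have hεv : ε = Garside.wordProd n (v ++ q) := by
      rw [Garside.wordProd_append, hpv, hqq, mul_inv_cancel_left]
    have hE : Garside.Eqv (u ++ p) (v ++ q) :=
      Garside.eqv_of_wordProd_eq hup hvq (hεu.symm.trans hεv)
    obtain ⟨r, hr⟩ := hwmin (u ++ p) ⟨p, Garside.Eqv.refl _⟩ ⟨q, hE⟩
    have hrmem : ∀ x ∈ r, x < n - 1 := fun x hx =>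
      hup x (hr.mem.mpr (by simp [hx]))
    have hεw : ε = Garside.wordProd n w * Garside.wordProd n r := by
      rw [hεu, ← Garside.wordProd_append]
      exact Garside.wordProd_eqv hr hup
    rw [LDiv, hεw, inv_mul_cancel_left]
    exact Garside.wordProd_mem_Bplus r (fun x hx => by have := hrmem x hx; omega)
  · exact Garside.wordProd_mem_Bplus w (fun x hx => by have := hwmem x hx; omega)


end Braid
end
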